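/- arXiv:quant-ph/0009090 — 6 statements merged into one kernel-verified Lean document; each statement's English description precedes it below -/
import Mathlib

section
/- For every pure product state A = A₁⊗⋯⊗A_p on ℂ^N, one has Tr(E_ψ A) ≤ |v_{j₀}|², where |v_{j₀}| = max_j |v_j|. -/
open Matrix BigOperators ComplexOrder

noncomputable section

/-- The Frobenius inner product `⟨A, B⟩ = Tr(Aᴴ B)`. -/
def frobInner {m : Type*} [Fintype m] (A B : Matrix m m ℂ) : ℂ :=
  (Aᴴ * B).trace

/-- The Frobenius norm associated to the Frobenius inner product. -/
def frobNorm {m : Type*} [Fintype m] (A : Matrix m m ℂ) : ℝ :=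
  Real.sqrt (frobInner A A).re

/-- A state (density matrix): a positive semidefinite (Hermitian) matrix of trace one. -/
def IsState {m : Type*} [Fintype m] (M : Matrix m m ℂ) : Prop :=
  M.PosSemidef ∧ M.trace = 1

/-- A pure state: a rank-one orthogonal projection, i.e. a Hermitian idempotent of trace one. -/
def IsPureState {m : Type*} [Fintype m] (M : Matrix m m ℂ) : Prop :=
  M.IsHermitian ∧ M * M = M ∧ M.trace = 1

/-- The Kronecker product of the matrices `A α`, realized on the tuple basis of the
tensor product `ℂ^{n 0} ⊗ ⋯ ⊗ ℂ^{n (p-1)} ≃ ℂ^N`, `N = ∏ α, n α`. -/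
def prodMat {p : ℕ} {n : Fin p → ℕ} (A : ∀ α, Matrix (Fin (n α)) (Fin (n α)) ℂ) :
    Matrix (∀ α, Fin (n α)) (∀ α, Fin (n α)) ℂ :=
  fun j k => ∏ α, A α (j α) (k α)

/-- A pure product state: a Kronecker product of pure states on the factors. -/
def IsPureProductState {p : ℕ} {n : Fin p → ℕ}
    (M : Matrix (∀ α, Fin (n α)) (∀ α, Fin (n α)) ℂ) : Prop :=
  ∃ A : ∀ α, Matrix (Fin (n α)) (Fin (n α)) ℂ,
    (∀ α, IsPureState (A α)) ∧ M = prodMat A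

/-- A (fully) separable state: a finite convex combination of pure product states. -/
def IsSeparableState {p : ℕ} {n : Fin p → ℕ}
    (M : Matrix (∀ α, Fin (n α)) (∀ α, Fin (n α)) ℂ) : Prop :=
  ∃ (k : ℕ) (c : Fin k → ℝ) (P : Fin k → Matrix (∀ α, Fin (n α)) (∀ α, Fin (n α)) ℂ),
    (∀ i, 0 ≤ c i) ∧ (∑ i, c i) = 1 ∧ (∀ i, IsPureProductState (P i)) ∧
      M = ∑ i, (c i : ℂ) • P i

/-- The vector `ψ = ∑ j, v j • (e j ⊗ ⋯ ⊗ e j)`, where `e j` is the `j`-th standard basis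
vector of each factor (embedded via `n 0 ≤ n α`). -/
def psiVec {p : ℕ} {n : Fin (p + 2) → ℕ} (hn : Monotone n) (v : Fin (n 0) → ℂ) :
    (∀ α, Fin (n α)) → ℂ :=
  fun x => ∑ j : Fin (n 0), v j *
    ∏ α, (if x α = Fin.castLE (hn (Fin.zero_le α)) j then (1 : ℂ) else 0)

/-- The pure state `E_ψ = |ψ⟩⟨ψ|`. -/
def Epsi {p : ℕ} {n : Fin (p + 2) → ℕ} (hn : Monotone n) (v : Fin (n 0) → ℂ) :
    Matrix (∀ α, Fin (n α)) (∀ α, Fin (n α)) ℂ :=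
  fun x y => psiVec hn v x * star (psiVec hn v y)

/- ### Auxiliary lemmas -/
lemma cs_sqrt {ι : Type*} [Fintype ι] (f g : ι → ℝ) (hf : ∀ i, 0 ≤ f i) (hg : ∀ i, 0 ≤ g i) :
    ∑ i, f i * g i ≤ Real.sqrt (∑ i, f i ^ 2) * Real.sqrt (∑ i, g i ^ 2) := by
  have h1 : (0:ℝ) ≤ ∑ i, f i ^ 2 := Finset.sum_nonneg fun i _ => sq_nonneg _
  have h2 : (0:ℝ) ≤ ∑ i, g i ^ 2 := Finset.sum_nonneg fun i _ => sq_nonneg _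
  rw [← Real.sqrt_mul h1, Real.le_sqrt (Finset.sum_nonneg fun i _ => mul_nonneg (hf i) (hg i))]
  · exact Finset.sum_mul_sq_le_sq_mul_sq _ _ _
  · exact mul_nonneg h1 h2

section PureState
variable {m : Type*} [Fintype m] {M : Matrix m m ℂ} (hM : IsPureState M)
include hM

lemma pure_entry (j k : m) : M j k = ∑ l, M j l * star (M k l) := by
  conv_lhs => rw [← hM.2.1]
  rw [Matrix.mul_apply]
  refine Finset.sum_congr rfl fun l _ => ?_
  congr 1
  rw [← hM.1.apply l k]

lemma pure_diag_re (j : m) : (M j j).re = ∑ l, ‖M j l‖ ^ 2 := by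
  have h := congrArg Complex.re (pure_entry hM j j)
  rw [h, Complex.re_sum]
  refine Finset.sum_congr rfl fun l _ => ?_
  rw [Complex.star_def, Complex.mul_conj, Complex.ofReal_re, Complex.normSq_eq_norm_sq]

lemma pure_diag_nonneg (j : m) : 0 ≤ (M j j).re := by
  rw [pure_diag_re hM]; positivity

lemma pure_entry_bound (j k : m) :
    ‖M j k‖ ≤ Real.sqrt (M j j).re * Real.sqrt (M k k).re := by
  calc ‖M j k‖ = ‖∑ l, M j l * star (M k l)‖ := by rw [← pure_entry hM]
    _ ≤ ∑ l, ‖M j l‖ * ‖M k l‖ := by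
        refine (norm_sum_le _ _).trans (le_of_eq ?_)
        exact Finset.sum_congr rfl fun l _ => by rw [norm_mul, norm_star]
    _ ≤ Real.sqrt (∑ l, ‖M j l‖^2) * Real.sqrt (∑ l, ‖M k l‖^2) :=
        cs_sqrt _ _ (fun _ => norm_nonneg _) (fun _ => norm_nonneg _)
    _ = _ := by rw [pure_diag_re hM j, pure_diag_re hM k]

lemma pure_diag_sum : ∑ j, (M j j).re = 1 := by
  have h : (M.trace).re = 1 := by rw [hM.2.2]; simp
  rw [← h, Matrix.trace, Complex.re_sum]
  rfl

lemma pure_diag_le_one (j : m) : (M j j).re ≤ 1 := by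
  rw [← pure_diag_sum hM]
  exact Finset.single_le_sum (fun i _ => pure_diag_nonneg hM i) (Finset.mem_univ j)

end PureState

section TraceFormula
variable {p : ℕ} {n : Fin (p + 2) → ℕ} (hn : Monotone n) (v : Fin (n 0) → ℂ)

def dmap : Fin (n 0) → ∀ α, Fin (n α) := fun j α => Fin.castLE (hn (Fin.zero_le α)) j

lemma psi_eq (x : ∀ α, Fin (n α)) :
    psiVec hn v x = ∑ j, v j * (if x = dmap hn j then 1 else 0) := by
  unfold psiVec
  refine Finset.sum_congr rfl fun j _ => ?_
  congr 1
  by_cases h : x = dmap hn j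
  · rw [if_pos h, h]
    exact Finset.prod_eq_one fun α _ => if_pos rfl
  · rw [if_neg h]
    obtain ⟨α, hα⟩ : ∃ α, x α ≠ Fin.castLE (hn (Fin.zero_le α)) j := by
      by_contra hc; push_neg at hc; exact h (funext hc)
    exact Finset.prod_eq_zero (Finset.mem_univ α) (by simp [hα])

lemma sum_psi_mul (g : (∀ α, Fin (n α)) → ℂ) :
    ∑ x, psiVec hn v x * g x = ∑ j, v j * g (dmap hn j) := by
  simp only [psi_eq hn v, Finset.sum_mul]
  rw [Finset.sum_comm]
  refine Finset.sum_congr rfl fun j _ => ?_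
  simp [mul_assoc, ← Finset.mul_sum]

lemma sum_starpsi_mul (g : (∀ α, Fin (n α)) → ℂ) :
    ∑ x, star (psiVec hn v x) * g x = ∑ j, star (v j) * g (dmap hn j) := by
  have h : ∀ x, star (psiVec hn v x) = ∑ j, star (v j) * (if x = dmap hn j then 1 else 0) := by
    intro x
    rw [psi_eq hn v, star_sum]
    refine Finset.sum_congr rfl fun j _ => ?_
    rw [star_mul', apply_ite star, star_one, star_zero]
  simp only [h, Finset.sum_mul]
  rw [Finset.sum_comm]
  refine Finset.sum_congr rfl fun j _ => ?_
  simp [mul_assoc, ← Finset.mul_sum]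

lemma trace_formula (A : Matrix (∀ α, Fin (n α)) (∀ α, Fin (n α)) ℂ) :
    (Epsi hn v * A).trace = ∑ j, ∑ k, v j * (star (v k) * A (dmap hn k) (dmap hn j)) := by
  have h1 : (Epsi hn v * A).trace
      = ∑ x, psiVec hn v x * ∑ y, star (psiVec hn v y) * A y x := by
    rw [Matrix.trace]
    refine Finset.sum_congr rfl fun x _ => ?_
    rw [Matrix.diag_apply, Matrix.mul_apply, Finset.mul_sum]
    exact Finset.sum_congr rfl fun y _ => by rw [Epsi, mul_assoc]
  rw [h1, sum_psi_mul hn v]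
  refine Finset.sum_congr rfl fun j _ => ?_
  rw [sum_starpsi_mul hn v, Finset.mul_sum]

end TraceFormula

/-- For every pure product state `A = A₁ ⊗ ⋯ ⊗ A_p` on
`ℂ^{n₁} ⊗ ⋯ ⊗ ℂ^{n_p}` (with `2 ≤ n₁ ≤ ⋯ ≤ n_p`, `p ≥ 2`), one has
`Tr(E_ψ A) ≤ |v j₀|²` where `|v j₀| = max_j |v j|`.  (The inequality is in the
complex order, so in particular the trace is real.) -/
theorem trace_Epsi_pureProduct_le {p : ℕ} {n : Fin (p + 2) → ℕ}
    (hn : Monotone n) (hn₁ : 2 ≤ n 0)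
    (v : Fin (n 0) → ℂ) (hv : ∑ j, ‖v j‖ ^ 2 = 1)
    (j₀ : Fin (n 0)) (hj₀ : ∀ j, ‖v j‖ ≤ ‖v j₀‖)
    (A : Matrix (∀ α, Fin (n α)) (∀ α, Fin (n α)) ℂ) (hA : IsPureProductState A) :
    (Epsi hn v * A).trace ≤ ((‖v j₀‖ ^ 2 : ℝ) : ℂ) := by
  obtain ⟨u, hu, rfl⟩ := hA
  set T : ℂ := (Epsi hn v * prodMat u).trace with hT
  have hTf := trace_formula hn v (prodMat u)
  -- the square-root diagonal weights
  set s : Fin (p + 2) → Fin (n 0) → ℝ :=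
    fun α j => Real.sqrt ((u α (dmap hn j α) (dmap hn j α)).re) with hs
  have hs0 : ∀ α j, 0 ≤ s α j := fun α j => Real.sqrt_nonneg _
  have hs1 : ∀ α j, s α j ≤ 1 := fun α j => by
    rw [hs]
    exact Real.sqrt_le_one.mpr (pure_diag_le_one (hu α) _)
  have hb : ∀ (α : Fin (p + 2)) (j k : Fin (n 0)),
      ‖u α (dmap hn k α) (dmap hn j α)‖ ≤ s α k * s α j :=
    fun α j k => pure_entry_bound (hu α) _ _
  -- diagonal sums bounded by 1
  have hdsum : ∀ α : Fin (p + 2), ∑ j, s α j ^ 2 ≤ 1 := by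
    intro α
    have hsq : ∀ j, s α j ^ 2 = (u α (dmap hn j α) (dmap hn j α)).re := fun j =>
      Real.sq_sqrt (pure_diag_nonneg (hu α) _)
    calc ∑ j, s α j ^ 2 = ∑ j, (u α (dmap hn j α) (dmap hn j α)).re := by
          exact Finset.sum_congr rfl fun j _ => hsq j
      _ = ∑ i ∈ Finset.univ.image (fun j : Fin (n 0) => dmap hn j α), (u α i i).re := by
          rw [Finset.sum_image]
          intro a _ b _ h
          exact Fin.castLE_injective _ h
      _ ≤ ∑ i, (u α i i).re := Finset.sum_le_sum_of_subset_of_nonneg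
          (Finset.subset_univ _) (fun i _ _ => pure_diag_nonneg (hu α) i)
      _ = 1 := pure_diag_sum (hu α)
  -- weights
  set w : Fin (n 0) → ℝ := fun j => ‖v j‖ * ∏ α, s α j with hw
  have hw0 : ∀ j, 0 ≤ w j := fun j =>
    mul_nonneg (norm_nonneg _) (Finset.prod_nonneg fun α _ => hs0 α j)
  -- the key scalar bound : ∑ w ≤ ‖v j₀‖
  have hS : ∑ j, w j ≤ ‖v j₀‖ := by
    have hprod : ∀ j, ∏ α, s α j ≤ s 0 j * s 1 j := by
      intro j
      have h01 : (0 : Fin (p + 2)) ≠ 1 := by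
        simp [Fin.ext_iff]
      calc ∏ α, s α j
          = (∏ α ∈ ({0, 1} : Finset (Fin (p + 2))), s α j) *
            ∏ α ∈ ({0, 1} : Finset (Fin (p + 2)))ᶜ, s α j :=
            (Finset.prod_mul_prod_compl _ _).symm
        _ ≤ (∏ α ∈ ({0, 1} : Finset (Fin (p + 2))), s α j) * 1 := by
            refine mul_le_mul_of_nonneg_left ?_
              (Finset.prod_nonneg fun α _ => hs0 α j)
            exact Finset.prod_le_one (fun α _ => hs0 α j) (fun α _ => hs1 α j)
        _ = s 0 j * s 1 j := by rw [mul_one, Finset.prod_pair h01]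
    have hcs : ∑ j, s 0 j * s 1 j ≤ 1 := by
      calc ∑ j, s 0 j * s 1 j
          ≤ Real.sqrt (∑ j, s 0 j ^ 2) * Real.sqrt (∑ j, s 1 j ^ 2) :=
            cs_sqrt _ _ (hs0 0) (hs0 1)
        _ ≤ Real.sqrt 1 * Real.sqrt 1 := by
            gcongr
            exacts [hdsum 0, hdsum 1]
        _ = 1 := by rw [Real.sqrt_one, mul_one]
    calc ∑ j, w j ≤ ∑ j, ‖v j₀‖ * (s 0 j * s 1 j) := by
          refine Finset.sum_le_sum fun j _ => ?_
          exact mul_le_mul (hj₀ j) (hprod j)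
            (Finset.prod_nonneg fun α _ => hs0 α j) (norm_nonneg _)
      _ = ‖v j₀‖ * ∑ j, s 0 j * s 1 j := by rw [Finset.mul_sum]
      _ ≤ ‖v j₀‖ * 1 := mul_le_mul_of_nonneg_left hcs (norm_nonneg _)
      _ = ‖v j₀‖ := mul_one _
  -- the norm bound
  have hnorm : ‖T‖ ≤ ‖v j₀‖ ^ 2 := by
    calc ‖T‖ = ‖∑ j, ∑ k, v j * (star (v k) * prodMat u (dmap hn k) (dmap hn j))‖ := by
          rw [hT, hTf]
      _ ≤ ∑ j, ∑ k, ‖v j * (star (v k) * prodMat u (dmap hn k) (dmap hn j))‖ := by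
          refine (norm_sum_le _ _).trans (Finset.sum_le_sum fun j _ => norm_sum_le _ _)
      _ ≤ ∑ j, ∑ k, w j * w k := by
          refine Finset.sum_le_sum fun j _ => Finset.sum_le_sum fun k _ => ?_
          rw [norm_mul, norm_mul, norm_star]
          have hP : ‖prodMat u (dmap hn k) (dmap hn j)‖ ≤ (∏ α, s α k) * (∏ α, s α j) := by
            rw [prodMat, norm_prod, ← Finset.prod_mul_distrib]
            exact Finset.prod_le_prod (fun α _ => norm_nonneg _) (fun α _ => hb α j k)
          calc ‖v j‖ * (‖v k‖ * ‖prodMat u (dmap hn k) (dmap hn j)‖)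
              ≤ ‖v j‖ * (‖v k‖ * ((∏ α, s α k) * (∏ α, s α j))) := by
                refine mul_le_mul_of_nonneg_left ?_ (norm_nonneg _)
                exact mul_le_mul_of_nonneg_left hP (norm_nonneg _)
            _ = w j * w k := by rw [hw]; ring
      _ = (∑ j, w j) * (∑ k, w k) := (Finset.sum_mul_sum _ _ _ _).symm
      _ ≤ ‖v j₀‖ * ‖v j₀‖ := mul_le_mul hS hS (Finset.sum_nonneg fun j _ => hw0 j)
          (norm_nonneg _)
      _ = ‖v j₀‖ ^ 2 := (sq ‖v j₀‖).symm
  -- T is real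
  have hreal : T.im = 0 := by
    have hstar : star T = T := by
      rw [hT, hTf, star_sum]
      rw [Finset.sum_comm]
      refine Finset.sum_congr rfl fun j _ => ?_
      rw [star_sum]
      refine Finset.sum_congr rfl fun k _ => ?_
      have hPstar : star (prodMat u (dmap hn k) (dmap hn j))
          = prodMat u (dmap hn j) (dmap hn k) := by
        rw [prodMat, prodMat, star_prod]
        exact Finset.prod_congr rfl fun α _ => (hu α).1.apply _ _
      rw [star_mul', star_mul', star_star, hPstar]
      ring
    have := congrArg Complex.im hstar
    simp only [Complex.star_def, Complex.conj_im] at this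
    linarith
  rw [Complex.le_def]
  constructor
  · rw [Complex.ofReal_re]
    exact le_trans (Complex.re_le_norm T) hnorm
  · rw [Complex.ofReal_im, hreal]
end
end

section
/- Suppose in addition |v_j| < 1 for every j. Then the set G_ψ = {Q : Q is a state on ℂ^N and Tr(Q E_ψ) > |v_{j₀}|²} (where |v_{j₀}| = max_j |v_j|) is a convex set, is open in the set of all states on ℂ^N (with the Frobenius-norm topology), contains E_ψ, and contains no separable state. -/
open Matrix BigOperators ComplexOrder

noncomputable section

/-- The neighborhood `G_ψ = {Q : Q a state, Tr(Q E_ψ) > |v j₀|²}`. -/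
def Gpsi {p : ℕ} {n : Fin (p + 2) → ℕ} (hn : Monotone n) (v : Fin (n 0) → ℂ)
    (j₀ : Fin (n 0)) : Set (Matrix (∀ α, Fin (n α)) (∀ α, Fin (n α)) ℂ) :=
  {Q | IsState Q ∧ ((‖v j₀‖ ^ 2 : ℝ) : ℂ) < (Q * Epsi hn v).trace}

namespace GpsiAux

open Finset

variable {p : ℕ} {n : Fin (p + 2) → ℕ}

def dia (hn : Monotone n) (j : Fin (n 0)) : ∀ α, Fin (n α) :=
  fun α => Fin.castLE (hn (Fin.zero_le α)) j

lemma dia_injective (hn : Monotone n) : Function.Injective (dia hn) := by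
  intro j k h
  have h0 := congrFun h 0
  simpa [dia, Fin.castLE_inj] using h0

lemma prod_ind (hn : Monotone n) (j : Fin (n 0)) (x : ∀ α, Fin (n α)) :
    (∏ α, (if x α = Fin.castLE (hn (Fin.zero_le α)) j then (1:ℂ) else 0)) =
      if x = dia hn j then 1 else 0 := by
  by_cases h : x = dia hn j
  · subst h
    simp [dia]
  · rw [if_neg h]
    obtain ⟨α, hα⟩ : ∃ α, x α ≠ dia hn j α := by
      by_contra hc
      push_neg at hc
      exact h (funext hc)
    exact Finset.prod_eq_zero (Finset.mem_univ α) (if_neg hα)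

lemma psiVec_eq (hn : Monotone n) (v : Fin (n 0) → ℂ) (x : ∀ α, Fin (n α)) :
    psiVec hn v x = ∑ j, v j * (if x = dia hn j then 1 else 0) := by
  unfold psiVec
  refine Finset.sum_congr rfl fun j _ => ?_
  rw [prod_ind hn j x]

lemma psiVec_dia (hn : Monotone n) (v : Fin (n 0) → ℂ) (j : Fin (n 0)) :
    psiVec hn v (dia hn j) = v j := by
  rw [psiVec_eq]
  rw [Finset.sum_eq_single j]
  · simp
  · intro k _ hk
    rw [if_neg, mul_zero]
    intro he
    exact hk (dia_injective hn he).symm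
  · intro h; exact absurd (Finset.mem_univ _) h

lemma sum_mul_psi (hn : Monotone n) (v : Fin (n 0) → ℂ) (g : (∀ α, Fin (n α)) → ℂ) :
    ∑ x, g x * psiVec hn v x = ∑ j, g (dia hn j) * v j := by
  simp only [psiVec_eq hn v, Finset.mul_sum]
  rw [Finset.sum_comm]
  refine Finset.sum_congr rfl fun j _ => ?_
  rw [Finset.sum_eq_single (dia hn j)]
  · simp [mul_comm]
  · intro x _ hx
    simp [hx]
  · intro h; exact absurd (Finset.mem_univ _) h

lemma star_psiVec_eq (hn : Monotone n) (v : Fin (n 0) → ℂ) (x : ∀ α, Fin (n α)) :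
    star (psiVec hn v x) = ∑ j, star (v j) * (if x = dia hn j then 1 else 0) := by
  rw [psiVec_eq, star_sum]
  refine Finset.sum_congr rfl fun j _ => ?_
  rw [star_mul']
  congr 1
  split <;> simp

lemma sum_mul_starPsi (hn : Monotone n) (v : Fin (n 0) → ℂ) (g : (∀ α, Fin (n α)) → ℂ) :
    ∑ x, g x * star (psiVec hn v x) = ∑ j, g (dia hn j) * star (v j) := by
  simp only [star_psiVec_eq hn v, Finset.mul_sum]
  rw [Finset.sum_comm]
  refine Finset.sum_congr rfl fun j _ => ?_
  rw [Finset.sum_eq_single (dia hn j)]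
  · simp [mul_comm]
  · intro x _ hx
    simp [hx]
  · intro h; exact absurd (Finset.mem_univ _) h

lemma trace_mul_Epsi (hn : Monotone n) (v : Fin (n 0) → ℂ)
    (M : Matrix (∀ α, Fin (n α)) (∀ α, Fin (n α)) ℂ) :
    (M * Epsi hn v).trace
      = ∑ j, ∑ k, M (dia hn j) (dia hn k) * v k * star (v j) := by
  have h1 : (M * Epsi hn v).trace
      = ∑ x, (∑ y, M x y * psiVec hn v y) * star (psiVec hn v x) := by
    rw [Matrix.trace]
    refine Finset.sum_congr rfl fun x _ => ?_
    rw [Matrix.diag_apply, Matrix.mul_apply, Finset.sum_mul]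
    refine Finset.sum_congr rfl fun y _ => ?_
    simp only [Epsi]
    ring
  rw [h1, sum_mul_starPsi]
  refine Finset.sum_congr rfl fun j _ => ?_
  rw [sum_mul_psi hn v (fun y => M (dia hn j) y), Finset.sum_mul]

lemma trace_mul_Epsi_dot (hn : Monotone n) (v : Fin (n 0) → ℂ)
    (M : Matrix (∀ α, Fin (n α)) (∀ α, Fin (n α)) ℂ) :
    (M * Epsi hn v).trace = star (psiVec hn v) ⬝ᵥ (M *ᵥ psiVec hn v) := by
  rw [Matrix.trace]
  simp only [Matrix.diag_apply, Matrix.mul_apply, Epsi, dotProduct, Matrix.mulVec,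
    Pi.star_apply]
  refine Finset.sum_congr rfl fun x _ => ?_
  rw [Finset.mul_sum]
  refine Finset.sum_congr rfl fun y _ => ?_
  ring


lemma Epsi_posSemidef (hn : Monotone n) (v : Fin (n 0) → ℂ) : (Epsi hn v).PosSemidef := by
  rw [Matrix.posSemidef_iff_dotProduct_mulVec]
  constructor
  · ext x y
    simp only [Matrix.conjTranspose_apply, Epsi, star_mul', star_star]
    ring
  · intro x
    have hkey : star x ⬝ᵥ (Epsi hn v *ᵥ x)
        = (∑ a, star (x a) * psiVec hn v a) * star (∑ a, star (x a) * psiVec hn v a) := by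
      rw [star_sum]
      simp only [dotProduct, Matrix.mulVec, Pi.star_apply, Epsi, Finset.mul_sum,
        Finset.sum_mul, star_mul', star_star]
      rw [Finset.sum_comm]
      refine Finset.sum_congr rfl fun a _ => Finset.sum_congr rfl fun b _ => ?_
      ring
    rw [hkey, Complex.star_def, Complex.mul_conj]
    rw [Complex.zero_le_real]
    exact Complex.normSq_nonneg _

lemma Epsi_trace (hn : Monotone n) (v : Fin (n 0) → ℂ) (hv : ∑ j, ‖v j‖ ^ 2 = 1) :
    (Epsi hn v).trace = 1 := by
  have : (Epsi hn v).trace = ∑ x, psiVec hn v x * star (psiVec hn v x) := rfl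
  rw [this, sum_mul_starPsi hn v (psiVec hn v)]
  have : ∀ j : Fin (n 0), psiVec hn v (dia hn j) * star (v j) = ((‖v j‖ ^ 2 : ℝ) : ℂ) := by
    intro j
    rw [psiVec_dia, Complex.star_def, Complex.mul_conj, Complex.normSq_eq_norm_sq]
  rw [Finset.sum_congr rfl fun j _ => this j, ← Complex.ofReal_sum, hv, Complex.ofReal_one]


section Frob
variable {m : Type*} [Fintype m]

lemma frobInner_self_re (A : Matrix m m ℂ) :
    (frobInner A A).re = ∑ q : m × m, ‖A q.1 q.2‖ ^ 2 := by
  have h : frobInner A A = ∑ x : m, ∑ y : m, star (A y x) * A y x := by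
    unfold frobInner
    rw [Matrix.trace]
    refine Finset.sum_congr rfl fun x _ => ?_
    rw [Matrix.diag_apply, Matrix.mul_apply]
    exact Finset.sum_congr rfl fun y _ => by rw [Matrix.conjTranspose_apply]
  rw [h]
  rw [Fintype.sum_prod_type]
  rw [Complex.re_sum]
  rw [Finset.sum_comm]
  refine Finset.sum_congr rfl fun x _ => ?_
  rw [Complex.re_sum]
  refine Finset.sum_congr rfl fun y _ => ?_
  rw [Complex.star_def, mul_comm, Complex.mul_conj, Complex.normSq_eq_norm_sq,
    Complex.ofReal_re]

lemma frob_cs (A B : Matrix m m ℂ) (hA : A.IsHermitian) :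
    ‖(A * B).trace‖ ≤ frobNorm A * frobNorm B := by
  have h : (A * B).trace = ∑ q : m × m, star (A q.2 q.1) * B q.2 q.1 := by
    rw [Matrix.trace, Fintype.sum_prod_type]
    refine Finset.sum_congr rfl fun x _ => ?_
    rw [Matrix.diag_apply, Matrix.mul_apply]
    refine Finset.sum_congr rfl fun y _ => ?_
    congr 1
    conv_lhs => rw [← hA]
    rw [Matrix.conjTranspose_apply]
  rw [h]
  calc ‖∑ q : m × m, star (A q.2 q.1) * B q.2 q.1‖
      ≤ ∑ q : m × m, ‖star (A q.2 q.1) * B q.2 q.1‖ := norm_sum_le _ _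
    _ = ∑ q : m × m, ‖A q.2 q.1‖ * ‖B q.2 q.1‖ := by
        refine Finset.sum_congr rfl fun q _ => ?_
        rw [norm_mul, norm_star]
    _ ≤ Real.sqrt (∑ q : m × m, ‖A q.2 q.1‖ ^ 2) * Real.sqrt (∑ q : m × m, ‖B q.2 q.1‖ ^ 2) :=
        Real.sum_mul_le_sqrt_mul_sqrt _ _ _
    _ = frobNorm A * frobNorm B := by
        unfold frobNorm
        rw [frobInner_self_re A, frobInner_self_re B]
        congr 1 <;>
        · congr 1
          exact Fintype.sum_equiv (Equiv.prodComm m m) _ _ (fun q => rfl)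

end Frob

section Pure
variable {N : ℕ} {A : Matrix (Fin N) (Fin N) ℂ}

lemma pure_row (h : IsPureState A) (j : Fin N) :
    A j j = ((∑ l, ‖A j l‖ ^ 2 : ℝ) : ℂ) := by
  conv_lhs => rw [← h.2.1]
  rw [Matrix.mul_apply, Complex.ofReal_sum]
  refine Finset.sum_congr rfl fun l _ => ?_
  have hlj : A l j = star (A j l) := by
    conv_lhs => rw [← h.1]
    rw [Matrix.conjTranspose_apply]
  rw [hlj, Complex.star_def, Complex.mul_conj, Complex.normSq_eq_norm_sq]

lemma pure_diag_nonneg (h : IsPureState A) (j : Fin N) : 0 ≤ (A j j).re := by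
  rw [pure_row h j, Complex.ofReal_re]
  exact Finset.sum_nonneg fun l _ => sq_nonneg _

lemma pure_diag_sum (h : IsPureState A) : ∑ j, (A j j).re = 1 := by
  have := h.2.2
  rw [Matrix.trace] at this
  have := congrArg Complex.re this
  rw [Complex.re_sum] at this
  simpa using this

lemma pure_diag_le_one (h : IsPureState A) (j : Fin N) : (A j j).re ≤ 1 := by
  rw [← pure_diag_sum h]
  exact Finset.single_le_sum (fun l _ => pure_diag_nonneg h l) (Finset.mem_univ j)

lemma pure_offdiag (h : IsPureState A) (j k : Fin N) :
    ‖A j k‖ ≤ Real.sqrt (A j j).re * Real.sqrt (A k k).re := by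
  have hjk : A j k = ∑ l, A j l * star (A k l) := by
    conv_lhs => rw [← h.2.1]
    rw [Matrix.mul_apply]
    refine Finset.sum_congr rfl fun l _ => ?_
    congr 1
    conv_lhs => rw [← h.1]
    rw [Matrix.conjTranspose_apply]
  rw [hjk]
  calc ‖∑ l, A j l * star (A k l)‖ ≤ ∑ l, ‖A j l * star (A k l)‖ := norm_sum_le _ _
    _ = ∑ l, ‖A j l‖ * ‖A k l‖ := by
        refine Finset.sum_congr rfl fun l _ => ?_
        rw [norm_mul, norm_star]
    _ ≤ Real.sqrt (∑ l, ‖A j l‖ ^ 2) * Real.sqrt (∑ l, ‖A k l‖ ^ 2) :=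
        Real.sum_mul_le_sqrt_mul_sqrt _ _ _
    _ = Real.sqrt (A j j).re * Real.sqrt (A k k).re := by
        rw [pure_row h j, pure_row h k, Complex.ofReal_re, Complex.ofReal_re]

end Pure

lemma pureProduct_trace_norm_le (hn : Monotone n) (v : Fin (n 0) → ℂ)
    (j₀ : Fin (n 0)) (hj₀ : ∀ j, ‖v j‖ ≤ ‖v j₀‖)
    (A : ∀ α, Matrix (Fin (n α)) (Fin (n α)) ℂ) (hA : ∀ α, IsPureState (A α)) :
    ‖(prodMat A * Epsi hn v).trace‖ ≤ ‖v j₀‖ ^ 2 := by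
  set f : Fin (n 0) → Fin (p + 2) → ℝ :=
    fun j α => Real.sqrt ((A α (dia hn j α) (dia hn j α)).re) with hf
  set t : Fin (n 0) → ℝ := fun j => ∏ α, f j α with ht
  have hf0 : ∀ j α, 0 ≤ f j α := fun j α => Real.sqrt_nonneg _
  have ht0 : ∀ j, 0 ≤ t j := fun j => Finset.prod_nonneg fun α _ => hf0 j α
  have hfac01 : ∀ j α, f j α ≤ 1 := by
    intro j α
    rw [hf]
    rw [show (1:ℝ) = Real.sqrt 1 by rw [Real.sqrt_one]]
    exact Real.sqrt_le_sqrt (pure_diag_le_one (hA α) _)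
  have hne : (1 : Fin (p + 2)) ≠ 0 := by
    simp [Fin.ext_iff]
  have htf : ∀ j, t j ≤ f j 0 * f j 1 := by
    intro j
    have h1 : t j = f j 0 * ∏ α ∈ Finset.univ.erase 0, f j α := by
      rw [ht]
      exact (Finset.mul_prod_erase Finset.univ (f j) (Finset.mem_univ 0)).symm
    have h2 : ∏ α ∈ Finset.univ.erase 0, f j α
        = f j 1 * ∏ α ∈ (Finset.univ.erase 0).erase 1, f j α :=
      (Finset.mul_prod_erase _ (f j) (Finset.mem_erase.mpr ⟨hne, Finset.mem_univ 1⟩)).symm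
    have h3 : ∏ α ∈ (Finset.univ.erase 0).erase 1, f j α ≤ 1 :=
      Finset.prod_le_one (fun α _ => hf0 j α) (fun α _ => hfac01 j α)
    calc t j = f j 0 * (f j 1 * ∏ α ∈ (Finset.univ.erase 0).erase 1, f j α) := by
            rw [h1, h2]
      _ ≤ f j 0 * (f j 1 * 1) := by
            refine mul_le_mul_of_nonneg_left ?_ (hf0 j 0)
            exact mul_le_mul_of_nonneg_left h3 (hf0 j 1)
      _ = f j 0 * f j 1 := by rw [mul_one]
  have hsum01 : ∀ α : Fin (p + 2), ∑ j : Fin (n 0), (A α (dia hn j α) (dia hn j α)).re ≤ 1 := by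
    intro α
    have hinj : ∀ x ∈ Finset.univ, ∀ y ∈ Finset.univ,
        (fun j : Fin (n 0) => dia hn j α) x = (fun j : Fin (n 0) => dia hn j α) y → x = y := by
      intro x _ y _ h
      exact Fin.castLE_injective _ h
    have him : ∑ i ∈ Finset.univ.image (fun j : Fin (n 0) => dia hn j α), (A α i i).re
        = ∑ j : Fin (n 0), (A α (dia hn j α) (dia hn j α)).re := Finset.sum_image hinj
    rw [← him, ← pure_diag_sum (hA α)]
    exact Finset.sum_le_sum_of_subset_of_nonneg (Finset.subset_univ _)
      (fun i _ _ => pure_diag_nonneg (hA α) i)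
  have htsum : ∑ j, t j ≤ 1 := by
    have h1 : ∑ j, t j ≤ ∑ j, f j 0 * f j 1 := Finset.sum_le_sum fun j _ => htf j
    have h2 : ∑ j, f j 0 * f j 1
        ≤ Real.sqrt (∑ j : Fin (n 0), (A 0 (dia hn j 0) (dia hn j 0)).re)
          * Real.sqrt (∑ j : Fin (n 0), (A 1 (dia hn j 1) (dia hn j 1)).re) :=
      Real.sum_sqrt_mul_sqrt_le _ (fun j => pure_diag_nonneg (hA 0) _)
        (fun j => pure_diag_nonneg (hA 1) _)
    have h3 : Real.sqrt (∑ j : Fin (n 0), (A 0 (dia hn j 0) (dia hn j 0)).re) ≤ 1 :=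
      Real.sqrt_le_one.mpr (hsum01 0)
    have h4 : Real.sqrt (∑ j : Fin (n 0), (A 1 (dia hn j 1) (dia hn j 1)).re) ≤ 1 :=
      Real.sqrt_le_one.mpr (hsum01 1)
    calc ∑ j, t j ≤ _ * _ := le_trans h1 h2
      _ ≤ 1 * 1 := mul_le_mul h3 h4 (Real.sqrt_nonneg _) zero_le_one
      _ = 1 := mul_one 1
  have hvt : ∑ j, ‖v j‖ * t j ≤ ‖v j₀‖ := by
    calc ∑ j, ‖v j‖ * t j ≤ ∑ j, ‖v j₀‖ * t j :=
          Finset.sum_le_sum fun j _ => mul_le_mul_of_nonneg_right (hj₀ j) (ht0 j)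
      _ = ‖v j₀‖ * ∑ j, t j := by rw [Finset.mul_sum]
      _ ≤ ‖v j₀‖ * 1 := mul_le_mul_of_nonneg_left htsum (norm_nonneg _)
      _ = ‖v j₀‖ := mul_one _
  have hvt0 : 0 ≤ ∑ j, ‖v j‖ * t j :=
    Finset.sum_nonneg fun j _ => mul_nonneg (norm_nonneg _) (ht0 j)
  have hterm : ∀ j k : Fin (n 0),
      ‖prodMat A (dia hn j) (dia hn k) * v k * star (v j)‖
        ≤ (‖v j‖ * t j) * (‖v k‖ * t k) := by
    intro j k
    have h1 : ‖prodMat A (dia hn j) (dia hn k)‖ ≤ t j * t k := by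
      unfold prodMat
      rw [norm_prod]
      calc ∏ α, ‖A α (dia hn j α) (dia hn k α)‖ ≤ ∏ α, f j α * f k α :=
            Finset.prod_le_prod (fun α _ => norm_nonneg _)
              (fun α _ => pure_offdiag (hA α) _ _)
        _ = t j * t k := Finset.prod_mul_distrib
    rw [norm_mul, norm_mul, norm_star]
    calc ‖prodMat A (dia hn j) (dia hn k)‖ * ‖v k‖ * ‖v j‖
        ≤ (t j * t k) * ‖v k‖ * ‖v j‖ := by
          refine mul_le_mul_of_nonneg_right (mul_le_mul_of_nonneg_right h1 (norm_nonneg _))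
            (norm_nonneg _)
      _ = (‖v j‖ * t j) * (‖v k‖ * t k) := by ring
  rw [trace_mul_Epsi]
  calc ‖∑ j, ∑ k, prodMat A (dia hn j) (dia hn k) * v k * star (v j)‖
      ≤ ∑ j, ‖∑ k, prodMat A (dia hn j) (dia hn k) * v k * star (v j)‖ := norm_sum_le _ _
    _ ≤ ∑ j, ∑ k, ‖prodMat A (dia hn j) (dia hn k) * v k * star (v j)‖ :=
        Finset.sum_le_sum fun j _ => norm_sum_le _ _
    _ ≤ ∑ j, ∑ k, (‖v j‖ * t j) * (‖v k‖ * t k) :=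
        Finset.sum_le_sum fun j _ => Finset.sum_le_sum fun k _ => hterm j k
    _ = (∑ j, ‖v j‖ * t j) * (∑ k, ‖v k‖ * t k) := by rw [Finset.sum_mul_sum]
    _ ≤ ‖v j₀‖ * ‖v j₀‖ := mul_le_mul hvt hvt hvt0 (norm_nonneg _)
    _ = ‖v j₀‖ ^ 2 := (sq _).symm

end GpsiAux

lemma GpsiAux.combo_lt {c x y a b : ℝ} (ha : 0 ≤ a) (hb : 0 ≤ b) (hab : a + b = 1)
    (hx : c < x) (hy : c < y) : c < a * x + b * y := by
  rcases eq_or_lt_of_le ha with h|h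
  · have hb1 : b = 1 := by linarith
    rw [← h, hb1]
    simpa using hy
  · have h1 : a * c < a * x := (mul_lt_mul_iff_right₀ h).mpr hx
    have h2 : b * c ≤ b * y := mul_le_mul_of_nonneg_left hy.le hb
    have h3 : a * c + b * c = c := by rw [← add_mul, hab, one_mul]
    linarith


/-- Assume moreover `|v j| < 1` for every `j`.  Then
`G_ψ = {Q state : Tr(Q E_ψ) > |v j₀|²}` is convex, is open in the set of all states
(in the Frobenius-norm topology), contains `E_ψ`, and contains no separable state. -/
theorem Gpsi_convex_open_entangled {p : ℕ} {n : Fin (p + 2) → ℕ}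
    (hn : Monotone n) (hn₁ : 2 ≤ n 0)
    (v : Fin (n 0) → ℂ) (hv : ∑ j, ‖v j‖ ^ 2 = 1) (hv1 : ∀ j, ‖v j‖ < 1)
    (j₀ : Fin (n 0)) (hj₀ : ∀ j, ‖v j‖ ≤ ‖v j₀‖) :
    Convex ℝ (Gpsi hn v j₀) ∧
      (∀ Q ∈ Gpsi hn v j₀, ∃ ε > (0 : ℝ), ∀ R : Matrix (∀ α, Fin (n α)) (∀ α, Fin (n α)) ℂ,
        IsState R → frobNorm (R - Q) < ε → R ∈ Gpsi hn v j₀) ∧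
      Epsi hn v ∈ Gpsi hn v j₀ ∧
      (∀ Q ∈ Gpsi hn v j₀, ¬ IsSeparableState Q) := by
  classical
  have him0 : ∀ M : Matrix (∀ α, Fin (n α)) (∀ α, Fin (n α)) ℂ, M.PosSemidef →
      ((M * Epsi hn v).trace).im = 0 := by
    intro M hM
    have h := hM.dotProduct_mulVec_nonneg (psiVec hn v)
    rw [← GpsiAux.trace_mul_Epsi_dot] at h
    exact (Complex.nonneg_iff.mp h).2.symm
  refine ⟨?_, ?_, ?_, ?_⟩
  · -- convexity
    intro Q hQ R hR a b ha hb hab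
    obtain ⟨⟨hQps, hQtr⟩, hQlt⟩ := hQ
    obtain ⟨⟨hRps, hRtr⟩, hRlt⟩ := hR
    have hreQ : ‖v j₀‖ ^ 2 < ((Q * Epsi hn v).trace).re := by
      have h' := (Complex.lt_def.mp hQlt).1
      rwa [Complex.ofReal_re] at h'
    have hreR : ‖v j₀‖ ^ 2 < ((R * Epsi hn v).trace).re := by
      have h' := (Complex.lt_def.mp hRlt).1
      rwa [Complex.ofReal_re] at h'
    have htr : ((a • Q + b • R) * Epsi hn v).trace
        = (a : ℂ) * (Q * Epsi hn v).trace + (b : ℂ) * (R * Epsi hn v).trace := by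
      rw [Matrix.add_mul, Matrix.smul_mul, Matrix.smul_mul, Matrix.trace_add,
        Matrix.trace_smul, Matrix.trace_smul, Complex.real_smul, Complex.real_smul]
    refine ⟨⟨?_, ?_⟩, ?_⟩
    · rw [Matrix.posSemidef_iff_dotProduct_mulVec]
      constructor
      · rw [Matrix.IsHermitian, Matrix.conjTranspose_add, Matrix.conjTranspose_smul,
          Matrix.conjTranspose_smul, star_trivial, star_trivial, hQps.1, hRps.1]
      · intro x
        rw [Matrix.add_mulVec, Matrix.smul_mulVec, Matrix.smul_mulVec,
          dotProduct_add, dotProduct_smul, dotProduct_smul, Complex.real_smul,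
          Complex.real_smul]
        have h1 : (0 : ℂ) ≤ (a : ℂ) * (star x ⬝ᵥ Q *ᵥ x) :=
          mul_nonneg (Complex.zero_le_real.mpr ha) (hQps.dotProduct_mulVec_nonneg x)
        have h2 : (0 : ℂ) ≤ (b : ℂ) * (star x ⬝ᵥ R *ᵥ x) :=
          mul_nonneg (Complex.zero_le_real.mpr hb) (hRps.dotProduct_mulVec_nonneg x)
        exact add_nonneg h1 h2
    · rw [Matrix.trace_add, Matrix.trace_smul, Matrix.trace_smul, hQtr, hRtr,
        Complex.real_smul, Complex.real_smul, mul_one, mul_one]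
      exact_mod_cast congrArg (fun r : ℝ => (r : ℂ)) hab
    · rw [htr, Complex.lt_def]
      constructor
      · simp only [Complex.add_re, Complex.mul_re, Complex.ofReal_re, Complex.ofReal_im,
          zero_mul, sub_zero, Complex.ofReal_re]
        exact GpsiAux.combo_lt ha hb hab hreQ hreR
      · have hiQ := him0 Q hQps
        have hiR := him0 R hRps
        rw [Complex.ofReal_im]
        simp [Complex.add_im, Complex.mul_im, hiQ, hiR]
  · -- openness
    intro Q hQ
    obtain ⟨⟨hQps, hQtr⟩, hQlt⟩ := hQ
    have hreQ : ‖v j₀‖ ^ 2 < ((Q * Epsi hn v).trace).re := by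
      have h' := (Complex.lt_def.mp hQlt).1
      rwa [Complex.ofReal_re] at h'
    set NE := frobNorm (Epsi hn v) with hNE
    have hNE0 : 0 ≤ NE := Real.sqrt_nonneg _
    refine ⟨(((Q * Epsi hn v).trace).re - ‖v j₀‖ ^ 2) / (NE + 1),
      div_pos (by linarith) (by positivity), ?_⟩
    intro R hR hRQ
    refine ⟨hR, ?_⟩
    rw [Complex.lt_def]
    have hsplit : (R * Epsi hn v).trace
        = (Q * Epsi hn v).trace + ((R - Q) * Epsi hn v).trace := by
      rw [Matrix.sub_mul, Matrix.trace_sub]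
      ring
    constructor
    · have hherm : (R - Q).IsHermitian := hR.1.1.sub hQps.1
      have hcs : ‖((R - Q) * Epsi hn v).trace‖ ≤ frobNorm (R - Q) * NE :=
        GpsiAux.frob_cs _ _ hherm
      have hfn0 : 0 ≤ frobNorm (R - Q) := Real.sqrt_nonneg _
      have hlt : frobNorm (R - Q) * (NE + 1)
          < ((Q * Epsi hn v).trace).re - ‖v j₀‖ ^ 2 :=
        (lt_div_iff₀ (by positivity)).mp hRQ
      have habs : |(((R - Q) * Epsi hn v).trace).re| ≤ frobNorm (R - Q) * NE := by
        refine le_trans ?_ hcs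
        exact Complex.abs_re_le_norm _
      rw [hsplit, Complex.add_re, Complex.ofReal_re]
      have h1 : -(frobNorm (R - Q) * NE) ≤ (((R - Q) * Epsi hn v).trace).re :=
        neg_le_of_abs_le habs
      nlinarith
    · have hiR := him0 R hR.1
      rw [Complex.ofReal_im]
      exact hiR.symm
  · -- E_psi ∈ G_psi
    refine ⟨⟨GpsiAux.Epsi_posSemidef hn v, GpsiAux.Epsi_trace hn v hv⟩, ?_⟩
    have hterm : ∀ j k : Fin (n 0),
        Epsi hn v (GpsiAux.dia hn j) (GpsiAux.dia hn k) * v k * star (v j)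
          = (((‖v j‖ ^ 2 * ‖v k‖ ^ 2 : ℝ)) : ℂ) := by
      intro j k
      have h1 : Epsi hn v (GpsiAux.dia hn j) (GpsiAux.dia hn k) = v j * star (v k) := by
        rw [Epsi, GpsiAux.psiVec_dia, GpsiAux.psiVec_dia]
      rw [h1]
      have h2 : v j * star (v k) * v k * star (v j)
          = (v j * star (v j)) * (v k * star (v k)) := by ring
      rw [h2, Complex.star_def, Complex.mul_conj, Complex.mul_conj]
      rw [Complex.normSq_eq_norm_sq, Complex.normSq_eq_norm_sq, ← Complex.ofReal_mul]
    have htr : (Epsi hn v * Epsi hn v).trace = 1 := by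
      rw [GpsiAux.trace_mul_Epsi]
      rw [Finset.sum_congr rfl fun j _ => Finset.sum_congr rfl fun k _ => hterm j k]
      have h3 : ∑ j : Fin (n 0), ∑ k : Fin (n 0), (((‖v j‖ ^ 2 * ‖v k‖ ^ 2 : ℝ)) : ℂ)
          = (((∑ j, ‖v j‖ ^ 2) * (∑ k, ‖v k‖ ^ 2) : ℝ) : ℂ) := by
        push_cast
        rw [Finset.sum_mul_sum]
      rw [h3, hv, one_mul, Complex.ofReal_one]
    rw [htr]
    have hlt1 : ‖v j₀‖ ^ 2 < 1 := by nlinarith [hv1 j₀, norm_nonneg (v j₀)]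
    calc ((‖v j₀‖ ^ 2 : ℝ) : ℂ) < ((1 : ℝ) : ℂ) := Complex.real_lt_real.mpr hlt1
      _ = 1 := Complex.ofReal_one
  · -- no separable state
    rintro Q ⟨⟨hQps, hQtr⟩, hQlt⟩ ⟨k, c, P, hc0, hc1, hPP, rfl⟩
    have hreQ : ‖v j₀‖ ^ 2 < (((∑ i, (c i : ℂ) • P i) * Epsi hn v).trace).re := by
      have h' := (Complex.lt_def.mp hQlt).1
      rwa [Complex.ofReal_re] at h'
    have hexp : ((∑ i, (c i : ℂ) • P i) * Epsi hn v).trace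
        = ∑ i, (c i : ℂ) * (P i * Epsi hn v).trace := by
      rw [Matrix.sum_mul, Matrix.trace_sum]
      refine Finset.sum_congr rfl fun i _ => ?_
      rw [Matrix.smul_mul, Matrix.trace_smul, smul_eq_mul]
    have hbound : ∀ i, ((P i * Epsi hn v).trace).re ≤ ‖v j₀‖ ^ 2 := by
      intro i
      obtain ⟨A, hA, hPA⟩ := hPP i
      have hb := GpsiAux.pureProduct_trace_norm_le hn v j₀ hj₀ A hA
      rw [← hPA] at hb
      refine le_trans ?_ hb
      exact Complex.re_le_norm _
    have hle : (((∑ i, (c i : ℂ) • P i) * Epsi hn v).trace).re ≤ ‖v j₀‖ ^ 2 := by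
      rw [hexp, Complex.re_sum]
      calc ∑ i, ((c i : ℂ) * (P i * Epsi hn v).trace).re
          = ∑ i, c i * ((P i * Epsi hn v).trace).re := by
            refine Finset.sum_congr rfl fun i _ => ?_
            simp [Complex.mul_re]
        _ ≤ ∑ i, c i * ‖v j₀‖ ^ 2 :=
            Finset.sum_le_sum fun i _ => mul_le_mul_of_nonneg_left (hbound i) (hc0 i)
        _ = (∑ i, c i) * ‖v j₀‖ ^ 2 := (Finset.sum_mul _ _ _).symm
        _ = ‖v j₀‖ ^ 2 := by rw [hc1, one_mul]
    linarith
end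
end

section
/- Let N ≥ 2, let E be a pure state (rank-one orthogonal projection) on ℂ^N, and let X and Y be Hermitian N×N complex matrices each of trace 1. Then ‖X − Y‖ ≥ |Tr(XE) − Tr(YE)| · √(N/(N−1)) in Frobenius norm. -/
open Matrix BigOperators ComplexOrder

noncomputable section

def toEuc {m : Type*} [Fintype m] (A : Matrix m m ℂ) : EuclideanSpace ℂ (m × m) :=
  (WithLp.equiv 2 _).symm (fun p => A p.1 p.2)

lemma frobInner_eq_inner {m : Type*} [Fintype m] (A B : Matrix m m ℂ) :
    frobInner A B = inner ℂ (toEuc A) (toEuc B) := by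
  simp [frobInner, Matrix.trace, Matrix.diag, Matrix.mul_apply, PiLp.inner_apply,
    RCLike.inner_apply, toEuc, Fintype.sum_prod_type, Matrix.conjTranspose_apply]
  rw [Finset.sum_comm]
  exact Finset.sum_congr rfl fun _ _ => Finset.sum_congr rfl fun _ _ => mul_comm _ _

lemma frobNorm_eq_norm {m : Type*} [Fintype m] (A : Matrix m m ℂ) :
    frobNorm A = ‖toEuc A‖ := by
  rw [frobNorm, frobInner_eq_inner, @norm_eq_sqrt_re_inner ℂ]
  rfl

lemma frobCS {m : Type*} [Fintype m] (A B : Matrix m m ℂ) :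
    ‖frobInner A B‖ ≤ frobNorm A * frobNorm B := by
  rw [frobInner_eq_inner, frobNorm_eq_norm, frobNorm_eq_norm]
  exact norm_inner_le_norm (𝕜 := ℂ) _ _

/-- For `N ≥ 2`, a pure state `E` on `ℂ^N`, and Hermitian `N × N`
matrices `X, Y` of trace one, `‖X - Y‖ ≥ |Tr(XE) - Tr(YE)| ⬝ √(N/(N-1))`. -/
theorem frobNorm_sub_ge_trace_diff {N : ℕ} (hN : 2 ≤ N)
    (E X Y : Matrix (Fin N) (Fin N) ℂ) (hE : IsPureState E)
    (hX : X.IsHermitian) (hY : Y.IsHermitian)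
    (hXt : X.trace = 1) (hYt : Y.trace = 1) :
    ‖(X * E).trace - (Y * E).trace‖ * Real.sqrt ((N : ℝ) / ((N : ℝ) - 1))
      ≤ frobNorm (X - Y) := by
  obtain ⟨hEh, hEE, hEt⟩ := hE
  have hNR : (1:ℝ) ≤ (N:ℝ) - 1 := by
    have : (2:ℝ) ≤ (N:ℝ) := by exact_mod_cast hN
    linarith
  have hN0 : (0:ℝ) < (N:ℝ) := by linarith
  have hNc : (N:ℂ) ≠ 0 := by exact_mod_cast hN0.ne'
  set D := X - Y with hDdef
  have hDh : Dᴴ = D := by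
    simp [hDdef, Matrix.conjTranspose_sub, hX.eq, hY.eq]
  have hDt : D.trace = 0 := by
    simp [hDdef, Matrix.trace_sub, hXt, hYt]
  set c : ℂ := (N : ℂ)⁻¹ with hc
  set F := E - c • (1 : Matrix (Fin N) (Fin N) ℂ) with hFdef
  have h1 : frobInner D F = (X * E).trace - (Y * E).trace := by
    rw [frobInner, hDh, Matrix.mul_sub, Matrix.trace_sub, Matrix.mul_smul,
      Matrix.mul_one, Matrix.trace_smul, hDt, hDdef, Matrix.sub_mul, Matrix.trace_sub]
    simp
  have hFh : Fᴴ = F := by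
    simp [hFdef, Matrix.conjTranspose_sub, hEh.eq, hc, Matrix.conjTranspose_smul]
  have h3 : frobInner F F = 1 - c := by
    rw [frobInner, hFh, hFdef]
    have : (E - c • 1) * (E - c • 1) =
        E - (2 * c) • E + (c * c) • (1 : Matrix (Fin N) (Fin N) ℂ) := by
      rw [Matrix.sub_mul, Matrix.mul_sub, Matrix.mul_sub, hEE]
      simp [Matrix.smul_mul, Matrix.mul_smul, two_mul, add_smul, smul_smul]
      abel
    rw [this]
    rw [Matrix.trace_add, Matrix.trace_sub, Matrix.trace_smul, Matrix.trace_smul, hEt,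
      Matrix.trace_one]
    simp only [Fintype.card_fin, smul_eq_mul, mul_one]
    rw [hc]
    field_simp
    ring
  have hFre : (frobInner F F).re = ((N:ℝ) - 1) / (N:ℝ) := by
    rw [h3, hc]
    have : (1 : ℂ) - (N:ℂ)⁻¹ = ((((N:ℝ) - 1) / (N:ℝ) : ℝ) : ℂ) := by
      push_cast
      field_simp
    rw [this, Complex.ofReal_re]
  have hFn : frobNorm F = Real.sqrt (((N:ℝ) - 1) / (N:ℝ)) := by
    rw [frobNorm, hFre]
  have CS : ‖(X * E).trace - (Y * E).trace‖
      ≤ frobNorm D * Real.sqrt (((N:ℝ) - 1) / (N:ℝ)) := by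
    rw [← h1, ← hFn]
    exact frobCS D F
  have hs : Real.sqrt (((N:ℝ) - 1) / (N:ℝ)) * Real.sqrt ((N:ℝ) / ((N:ℝ) - 1)) = 1 := by
    rw [← Real.sqrt_mul (by positivity)]
    rw [show ((N:ℝ) - 1) / (N:ℝ) * ((N:ℝ) / ((N:ℝ) - 1)) = 1 by
      field_simp]
    exact Real.sqrt_one
  calc ‖(X * E).trace - (Y * E).trace‖ * Real.sqrt ((N : ℝ) / ((N : ℝ) - 1))
      ≤ (frobNorm D * Real.sqrt (((N:ℝ) - 1) / (N:ℝ))) * Real.sqrt ((N : ℝ) / ((N : ℝ) - 1)) := by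
        apply mul_le_mul_of_nonneg_right CS (Real.sqrt_nonneg _)
    _ = frobNorm D := by rw [mul_assoc, hs, mul_one]
end
end

section
/- Suppose in addition |v_j| < 1 for every j, and let |v_{j₀}| = max_j |v_j|. For every real λ with 0 ≤ λ < (1 − |v_{j₀}|²)·N/(N−1), the decohered state (1−λ)E_ψ + (λ/N)·I is entangled, where I is the N×N identity matrix. -/
open Matrix BigOperators ComplexOrder

noncomputable section

section helper

lemma star_mul_self_eq (z : ℂ) : star z * z = ((‖z‖ ^ 2 : ℝ) : ℂ) := by
  rw [Complex.star_def, mul_comm, Complex.mul_conj, Complex.normSq_eq_norm_sq,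
    Complex.ofReal_pow]

end helper

namespace DecoheredAux

variable {m : ℕ} {A : Matrix (Fin m) (Fin m) ℂ}

lemma pure_entry (hA : IsPureState A) (j k : Fin m) :
    A j k = ∑ i, star (A i j) * A i k := by
  have key : Aᴴ * A = A := by rw [hA.1, hA.2.1]
  conv_lhs => rw [← key]
  simp [Matrix.mul_apply, Matrix.conjTranspose_apply]

lemma pure_diag_re (hA : IsPureState A) (j : Fin m) :
    (A j j).re = ∑ i, ‖A i j‖ ^ 2 := by
  rw [pure_entry hA j j, Complex.re_sum]
  congr 1; ext i
  simp [Complex.star_def, mul_comm, Complex.mul_conj, Complex.normSq_eq_norm_sq,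
    ← Complex.ofReal_pow]

lemma pure_diag_nonneg (hA : IsPureState A) (j : Fin m) : 0 ≤ (A j j).re := by
  rw [pure_diag_re hA]; positivity

lemma pure_diag_le_one (hA : IsPureState A) (j : Fin m) : (A j j).re ≤ 1 := by
  have ht : (A.trace).re = 1 := by rw [hA.2.2]; simp
  rw [Matrix.trace, Complex.re_sum] at ht
  rw [← ht]
  exact Finset.single_le_sum (f := fun i => (A i i).re)
    (fun i _ => pure_diag_nonneg hA i) (Finset.mem_univ j)

lemma pure_entry_bound (hA : IsPureState A) (j k : Fin m) :
    ‖A j k‖ ≤ Real.sqrt ((A j j).re) * Real.sqrt ((A k k).re) := by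
  rw [pure_entry hA j k, pure_diag_re hA j, pure_diag_re hA k]
  calc ‖∑ i, star (A i j) * A i k‖ ≤ ∑ i, ‖star (A i j) * A i k‖ := norm_sum_le _ _
    _ = ∑ i, ‖A i j‖ * ‖A i k‖ := by simp [norm_mul]
    _ ≤ _ := Real.sum_mul_le_sqrt_mul_sqrt _ _ _

lemma pure_sub_diag_sum (hA : IsPureState A) {m₀ : ℕ} (e : Fin m₀ → Fin m)
    (he : Function.Injective e) : ∑ j, (A (e j) (e j)).re ≤ 1 := by
  have ht : (A.trace).re = 1 := by rw [hA.2.2]; simp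
  rw [Matrix.trace, Complex.re_sum] at ht
  rw [← ht, ← Finset.sum_image (f := fun i => (A i i).re)
    (g := e) (fun a _ b _ h => he h)]
  exact Finset.sum_le_sum_of_subset_of_nonneg (Finset.subset_univ _)
    (fun i _ _ => pure_diag_nonneg hA i)

variable {p : ℕ} {n : Fin (p + 2) → ℕ}

def Dvec (hn : Monotone n) (j : Fin (n 0)) : ∀ α, Fin (n α) :=
  fun α => Fin.castLE (hn (Fin.zero_le α)) j

lemma Dvec_injective (hn : Monotone n) : Function.Injective (Dvec hn) := by
  intro j k h
  have := congrFun h 0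
  exact Fin.castLE_injective _ this

lemma psiVec_eq (hn : Monotone n) (v : Fin (n 0) → ℂ) (x : ∀ α, Fin (n α)) :
    psiVec hn v x = ∑ j, v j * (if x = Dvec hn j then 1 else 0) := by
  unfold psiVec
  congr 1; ext j
  congr 1
  by_cases h : x = Dvec hn j
  · subst h; simp [Dvec]
  · rw [if_neg h]
    have : ∃ α, x α ≠ Dvec hn j α := by
      by_contra hc; push_neg at hc; exact h (funext hc)
    obtain ⟨α, hα⟩ := this
    exact Finset.prod_eq_zero (Finset.mem_univ α) (by simp [Dvec] at hα ⊢; simp [hα])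

lemma psiVec_Dvec (hn : Monotone n) (v : Fin (n 0) → ℂ) (j : Fin (n 0)) :
    psiVec hn v (Dvec hn j) = v j := by
  rw [psiVec_eq]
  have : ∀ k : Fin (n 0), (if Dvec hn j = Dvec hn k then (1:ℂ) else 0)
      = if j = k then 1 else 0 := by
    intro k
    simp [Function.Injective.eq_iff (Dvec_injective hn)]
  simp_rw [this, mul_ite, mul_one, mul_zero]
  simp

lemma sum_psi_mul (hn : Monotone n) (v : Fin (n 0) → ℂ) (g : (∀ α, Fin (n α)) → ℂ) :
    ∑ x, psiVec hn v x * g x = ∑ j, v j * g (Dvec hn j) := by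
  simp_rw [psiVec_eq hn v, Finset.sum_mul]
  rw [Finset.sum_comm]
  congr 1; ext j
  simp [mul_ite, ite_mul, mul_assoc]

lemma sum_star_psi_mul (hn : Monotone n) (v : Fin (n 0) → ℂ) (g : (∀ α, Fin (n α)) → ℂ) :
    ∑ x, star (psiVec hn v x) * g x = ∑ j, star (v j) * g (Dvec hn j) := by
  have h1 : ∀ x, star (psiVec hn v x) * g x = star (psiVec hn v x * star (g x)) := by
    intro x; rw [star_mul', star_star]
  have h2 : ∀ j, star (v j) * g (Dvec hn j) = star (v j * star (g (Dvec hn j))) := by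
    intro j; rw [star_mul', star_star]
  simp_rw [h1, h2, ← star_sum]
  rw [sum_psi_mul hn v (fun x => star (g x))]

lemma frob_Epsi (hn : Monotone n) (v : Fin (n 0) → ℂ)
    (M : Matrix (∀ α, Fin (n α)) (∀ α, Fin (n α)) ℂ) :
    frobInner (Epsi hn v) M =
      ∑ j, ∑ k, star (v j) * v k * M (Dvec hn j) (Dvec hn k) := by
  unfold frobInner
  rw [Matrix.trace]
  simp only [Matrix.diag, Matrix.mul_apply, Matrix.conjTranspose_apply, Epsi]
  rw [Finset.sum_comm]
  have : ∀ y, ∑ x, star (psiVec hn v y * star (psiVec hn v x)) * M y x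
      = star (psiVec hn v y) * ∑ k, v k * M y (Dvec hn k) := by
    intro y
    rw [← sum_psi_mul hn v (fun x => M y x)]
    rw [Finset.mul_sum]
    congr 1; ext x
    simp only [star_mul', star_star]
    ring
  simp_rw [this]
  rw [sum_star_psi_mul hn v (fun y => ∑ k, v k * M y (Dvec hn k))]
  congr 1; ext j
  rw [Finset.mul_sum]
  congr 1; ext k
  ring

lemma frob_Epsi_self (hn : Monotone n) (v : Fin (n 0) → ℂ)
    (hv : ∑ j, ‖v j‖ ^ 2 = 1) :
    frobInner (Epsi hn v) (Epsi hn v) = 1 := by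
  rw [frob_Epsi]
  have : ∀ j k : Fin (n 0), star (v j) * v k * Epsi hn v (Dvec hn j) (Dvec hn k)
      = ((‖v j‖ ^ 2 : ℝ) : ℂ) * ((‖v k‖ ^ 2 : ℝ) : ℂ) := by
    intro j k
    rw [Epsi, psiVec_Dvec, psiVec_Dvec, ← star_mul_self_eq (v j), ← star_mul_self_eq (v k)]
    ring
  simp_rw [this]
  have h1 : (∑ j, ((‖v j‖ ^ 2 : ℝ) : ℂ)) = 1 := by
    rw [← Complex.ofReal_sum, hv]; norm_num
  rw [← Finset.sum_mul_sum, h1, one_mul]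

lemma frob_Epsi_one (hn : Monotone n) (v : Fin (n 0) → ℂ)
    (hv : ∑ j, ‖v j‖ ^ 2 = 1) :
    frobInner (Epsi hn v) 1 = 1 := by
  rw [frob_Epsi]
  have : ∀ j k : Fin (n 0), star (v j) * v k *
      (1 : Matrix (∀ α, Fin (n α)) (∀ α, Fin (n α)) ℂ) (Dvec hn j) (Dvec hn k)
      = star (v j) * v k * (if j = k then 1 else 0) := by
    intro j k
    rw [Matrix.one_apply]
    simp [Function.Injective.eq_iff (Dvec_injective hn)]
  simp_rw [this, mul_ite, mul_one, mul_zero, Finset.sum_ite_eq, Finset.mem_univ,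
    if_true, star_mul_self_eq, ← Complex.ofReal_sum, hv]
  norm_num

lemma frobInner_add_right {m : Type*} [Fintype m] (A B C : Matrix m m ℂ) :
    frobInner A (B + C) = frobInner A B + frobInner A C := by
  unfold frobInner; rw [Matrix.mul_add, Matrix.trace_add]

lemma frobInner_smul_right {m : Type*} [Fintype m] (A B : Matrix m m ℂ) (c : ℂ) :
    frobInner A (c • B) = c * frobInner A B := by
  unfold frobInner; rw [Matrix.mul_smul, Matrix.trace_smul, smul_eq_mul]

lemma frobInner_sum_right {m : Type*} [Fintype m] {k : ℕ} (A : Matrix m m ℂ)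
    (P : Fin k → Matrix m m ℂ) :
    frobInner A (∑ i, P i) = ∑ i, frobInner A (P i) := by
  unfold frobInner; rw [Finset.mul_sum, Matrix.trace_sum]

lemma frob_prod_bound (hn : Monotone n) (v : Fin (n 0) → ℂ)
    (j₀ : Fin (n 0)) (hj₀ : ∀ j, ‖v j‖ ≤ ‖v j₀‖)
    (A : ∀ α, Matrix (Fin (n α)) (Fin (n α)) ℂ) (hA : ∀ α, IsPureState (A α)) :
    ‖frobInner (Epsi hn v) (prodMat A)‖ ≤ ‖v j₀‖ ^ 2 := by
  rw [frob_Epsi]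
  set t : (α : Fin (p + 2)) → Fin (n 0) → ℝ :=
    fun α j => Real.sqrt ((A α (Dvec hn j α) (Dvec hn j α)).re) with ht
  have ht0 : ∀ α j, 0 ≤ t α j := fun α j => Real.sqrt_nonneg _
  have ht1 : ∀ α j, t α j ≤ 1 := fun α j =>
    Real.sqrt_le_one.mpr (pure_diag_le_one (hA α) _)
  have htsq : ∀ α, ∑ j, (t α j) ^ 2 ≤ 1 := by
    intro α
    have : ∀ j, (t α j) ^ 2 = (A α (Dvec hn j α) (Dvec hn j α)).re := fun j =>
      Real.sq_sqrt (pure_diag_nonneg (hA α) _)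
    simp_rw [this]
    exact pure_sub_diag_sum (hA α) (fun j => Dvec hn j α)
      (fun a b h => Fin.castLE_injective _ h)
  set u : Fin (n 0) → ℝ := fun j => ‖v j‖ * ∏ α, t α j with hu
  have hu0 : ∀ j, 0 ≤ u j := fun j => mul_nonneg (norm_nonneg _)
    (Finset.prod_nonneg fun α _ => ht0 α j)
  -- step 1 : the double sum is bounded by (∑ u)^2
  have step1 : ‖∑ j, ∑ k, star (v j) * v k * prodMat A (Dvec hn j) (Dvec hn k)‖
      ≤ (∑ j, u j) ^ 2 := by
    calc ‖∑ j, ∑ k, star (v j) * v k * prodMat A (Dvec hn j) (Dvec hn k)‖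
        ≤ ∑ j, ∑ k, ‖star (v j) * v k * prodMat A (Dvec hn j) (Dvec hn k)‖ := by
          refine (norm_sum_le _ _).trans (Finset.sum_le_sum fun j _ => norm_sum_le _ _)
      _ ≤ ∑ j, ∑ k, u j * u k := by
          refine Finset.sum_le_sum fun j _ => Finset.sum_le_sum fun k _ => ?_
          rw [norm_mul, norm_mul, norm_star]
          have hprod : ‖prodMat A (Dvec hn j) (Dvec hn k)‖ ≤ (∏ α, t α j) * (∏ α, t α k) := by
            rw [prodMat, ← Finset.prod_mul_distrib]
            calc ‖∏ α, A α (Dvec hn j α) (Dvec hn k α)‖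
                = ∏ α, ‖A α (Dvec hn j α) (Dvec hn k α)‖ := by rw [norm_prod]
              _ ≤ ∏ α, t α j * t α k := by
                  refine Finset.prod_le_prod (fun α _ => norm_nonneg _) fun α _ => ?_
                  exact pure_entry_bound (hA α) _ _
          calc ‖v j‖ * ‖v k‖ * ‖prodMat A (Dvec hn j) (Dvec hn k)‖
              ≤ ‖v j‖ * ‖v k‖ * ((∏ α, t α j) * (∏ α, t α k)) := by
                refine mul_le_mul_of_nonneg_left hprod (by positivity)
            _ = u j * u k := by rw [hu]; ring
      _ = (∑ j, u j) ^ 2 := by rw [sq, Finset.sum_mul_sum]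
  -- step 2 : ∑ u ≤ ‖v j₀‖
  have step2 : ∑ j, u j ≤ ‖v j₀‖ := by
    have hprod2 : ∀ j, ∏ α, t α j ≤ t 0 j * t 1 j := by
      intro j
      rw [Fin.prod_univ_succ, Fin.prod_univ_succ]
      have hrest : ∏ α : Fin p, t α.succ.succ j ≤ 1 :=
        Finset.prod_le_one (fun α _ => ht0 _ j) (fun α _ => ht1 _ j)
      calc t 0 j * (t 1 j * ∏ α : Fin p, t α.succ.succ j)
          ≤ t 0 j * (t 1 j * 1) := by
            refine mul_le_mul_of_nonneg_left ?_ (ht0 0 j)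
            exact mul_le_mul_of_nonneg_left hrest (ht0 1 j)
        _ = t 0 j * t 1 j := by ring
    calc ∑ j, u j ≤ ∑ j, ‖v j₀‖ * (t 0 j * t 1 j) := by
          refine Finset.sum_le_sum fun j _ => ?_
          rw [hu]
          have h1 : ‖v j‖ * ∏ α, t α j ≤ ‖v j‖ * (t 0 j * t 1 j) :=
            mul_le_mul_of_nonneg_left (hprod2 j) (norm_nonneg _)
          refine h1.trans ?_
          exact mul_le_mul_of_nonneg_right (hj₀ j)
            (mul_nonneg (ht0 0 j) (ht0 1 j))
      _ = ‖v j₀‖ * ∑ j, t 0 j * t 1 j := by rw [Finset.mul_sum]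
      _ ≤ ‖v j₀‖ * 1 := by
          refine mul_le_mul_of_nonneg_left ?_ (norm_nonneg _)
          calc ∑ j, t 0 j * t 1 j
              ≤ Real.sqrt (∑ j, (t 0 j)^2) * Real.sqrt (∑ j, (t 1 j)^2) :=
                Real.sum_mul_le_sqrt_mul_sqrt _ _ _
            _ ≤ 1 * 1 := by
                refine mul_le_mul ?_ ?_ (Real.sqrt_nonneg _) zero_le_one
                · exact Real.sqrt_le_one.mpr (htsq 0)
                · exact Real.sqrt_le_one.mpr (htsq 1)
            _ = 1 := one_mul 1
      _ = ‖v j₀‖ := mul_one _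
  refine step1.trans ?_
  have := pow_le_pow_left₀ (Finset.sum_nonneg fun j _ => hu0 j) step2 2
  exact this

end DecoheredAux

/-- Assume moreover `|v j| < 1` for every `j`, and let
`|v j₀| = max_j |v j|`.  For every real `λ` with
`0 ≤ λ < (1 - |v j₀|²) ⬝ N/(N-1)`, where `N = ∏ α, n α`, the decohered state
`(1 - λ) E_ψ + (λ/N) I` is entangled. -/


theorem decohered_Epsi_entangled {p : ℕ} {n : Fin (p + 2) → ℕ}
    (hn : Monotone n) (hn₁ : 2 ≤ n 0)
    (v : Fin (n 0) → ℂ) (hv : ∑ j, ‖v j‖ ^ 2 = 1) (hv1 : ∀ j, ‖v j‖ < 1)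
    (j₀ : Fin (n 0)) (hj₀ : ∀ j, ‖v j‖ ≤ ‖v j₀‖)
    (lam : ℝ) (hlam0 : 0 ≤ lam)
    (hlam1 : lam < (1 - ‖v j₀‖ ^ 2) * ((∏ α, n α : ℕ) : ℝ) / (((∏ α, n α : ℕ) : ℝ) - 1)) :
    ¬ IsSeparableState (((1 - lam : ℝ) : ℂ) • Epsi hn v +
      ((lam / ((∏ α, n α : ℕ) : ℝ) : ℝ) : ℂ) •
        (1 : Matrix (∀ α, Fin (n α)) (∀ α, Fin (n α)) ℂ)) := by
  rintro ⟨k, c, P, hc0, hc1, hP, hrho⟩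
  set Nr : ℝ := ((∏ α, n α : ℕ) : ℝ) with hNr
  have hN2 : (2 : ℝ) ≤ Nr := by
    have h1 : (2 : ℕ) ≤ ∏ α, n α :=
      le_trans hn₁ (Finset.single_le_prod'
        (fun i _ => le_trans (by norm_num) (le_trans hn₁ (hn (Fin.zero_le i))))
        (Finset.mem_univ 0))
    rw [hNr]; exact_mod_cast h1
  have hNpos : (0 : ℝ) < Nr := by linarith
  have hlhs : (frobInner (Epsi hn v) (((1 - lam : ℝ) : ℂ) • Epsi hn v +
      ((lam / Nr : ℝ) : ℂ) • (1 : Matrix (∀ α, Fin (n α)) (∀ α, Fin (n α)) ℂ))).re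
      = (1 - lam) + lam / Nr := by
    rw [DecoheredAux.frobInner_add_right, DecoheredAux.frobInner_smul_right,
      DecoheredAux.frobInner_smul_right, DecoheredAux.frob_Epsi_self hn v hv,
      DecoheredAux.frob_Epsi_one hn v hv]
    simp
  have hrhs : (frobInner (Epsi hn v) (∑ i, (c i : ℂ) • P i)).re ≤ ‖v j₀‖ ^ 2 := by
    rw [DecoheredAux.frobInner_sum_right, Complex.re_sum]
    calc ∑ i, (frobInner (Epsi hn v) ((c i : ℂ) • P i)).re
        ≤ ∑ i, c i * ‖v j₀‖ ^ 2 := by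
          refine Finset.sum_le_sum fun i _ => ?_
          rw [DecoheredAux.frobInner_smul_right]
          obtain ⟨A, hA, hPi⟩ := hP i
          rw [hPi]
          have hre : ((c i : ℂ) * frobInner (Epsi hn v) (prodMat A)).re
              = c i * (frobInner (Epsi hn v) (prodMat A)).re := by
            simp [Complex.mul_re]
          rw [hre]
          refine mul_le_mul_of_nonneg_left ?_ (hc0 i)
          calc (frobInner (Epsi hn v) (prodMat A)).re
              ≤ ‖frobInner (Epsi hn v) (prodMat A)‖ := Complex.re_le_norm _
            _ ≤ ‖v j₀‖ ^ 2 := DecoheredAux.frob_prod_bound hn v j₀ hj₀ A hA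
      _ = ‖v j₀‖ ^ 2 := by rw [← Finset.sum_mul, hc1, one_mul]
  rw [hrho] at hlhs
  have key : (1 - lam) + lam / Nr ≤ ‖v j₀‖ ^ 2 := by rw [← hlhs]; exact hrhs
  have h1' : (1 - lam) * Nr + lam ≤ ‖v j₀‖ ^ 2 * Nr := by
    have := mul_le_mul_of_nonneg_right key hNpos.le
    rwa [add_mul, div_mul_cancel₀ _ hNpos.ne'] at this
  have h2' : lam * (Nr - 1) < (1 - ‖v j₀‖ ^ 2) * Nr := by
    rw [div_eq_mul_inv] at hlam1
    have hd : (0 : ℝ) < Nr - 1 := by linarith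
    rw [← div_eq_mul_inv, lt_div_iff₀ hd] at hlam1
    exact hlam1
  nlinarith [h1', h2']
end
end

section
/- Let 2 ≤ N₁ ≤ N₂ and N = N₁N₂, and let E be the maximally entangled pure state on ℂ^{N₁}⊗ℂ^{N₂}, i.e. E = |ψ⟩⟨ψ| with ψ = (1/√N₁) Σ_{j=1}^{N₁} e_j⊗e_j. Then every separable state Q on ℂ^N satisfies 0 ≤ Tr(QE) ≤ 1/N₁. -/
open Matrix BigOperators ComplexOrder

noncomputable section

/-- The Kronecker product of two matrices, on the product basis. -/
def prodMat2 {m₁ m₂ : Type*} (A : Matrix m₁ m₁ ℂ) (B : Matrix m₂ m₂ ℂ) :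
    Matrix (m₁ × m₂) (m₁ × m₂) ℂ :=
  fun j k => A j.1 k.1 * B j.2 k.2

/-- A pure product state on a bipartite system. -/
def IsPureProductState2 {m₁ m₂ : Type*} [Fintype m₁] [Fintype m₂]
    (M : Matrix (m₁ × m₂) (m₁ × m₂) ℂ) : Prop :=
  ∃ (A : Matrix m₁ m₁ ℂ) (B : Matrix m₂ m₂ ℂ),
    IsPureState A ∧ IsPureState B ∧ M = prodMat2 A B

/-- A separable state on a bipartite system: a finite convex combination of
pure product states. -/
def IsSeparable2 {m₁ m₂ : Type*} [Fintype m₁] [Fintype m₂]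
    (M : Matrix (m₁ × m₂) (m₁ × m₂) ℂ) : Prop :=
  ∃ (k : ℕ) (c : Fin k → ℝ) (P : Fin k → Matrix (m₁ × m₂) (m₁ × m₂) ℂ),
    (∀ i, 0 ≤ c i) ∧ (∑ i, c i) = 1 ∧ (∀ i, IsPureProductState2 (P i)) ∧
      M = ∑ i, (c i : ℂ) • P i

/-- The maximally entangled pure state on `ℂ^{N₁} ⊗ ℂ^{N₂}` (for `N₁ ≤ N₂`):
`E = |ψ⟩⟨ψ|` with `ψ = (1/√N₁) ∑ j, e j ⊗ e j`. -/
def maxEnt (N₁ N₂ : ℕ) : Matrix (Fin N₁ × Fin N₂) (Fin N₁ × Fin N₂) ℂ :=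
  fun x y =>
    (if (x.1 : ℕ) = (x.2 : ℕ) then (((Real.sqrt N₁ : ℝ) : ℂ))⁻¹ else 0) *
      star (if (y.1 : ℕ) = (y.2 : ℕ) then (((Real.sqrt N₁ : ℝ) : ℂ))⁻¹ else 0)

/- ### Auxiliary lemmas -/

lemma psd_diag_nonneg {n : Type*} [Fintype n] [DecidableEq n] {M : Matrix n n ℂ}
    (hM : M.PosSemidef) (i : n) : 0 ≤ M i i := by
  exact hM.diag_nonneg

lemma psd_trace_nonneg {n : Type*} [Fintype n] [DecidableEq n] {M : Matrix n n ℂ}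
    (hM : M.PosSemidef) : 0 ≤ M.trace :=
  Finset.sum_nonneg fun i _ => psd_diag_nonneg hM i

open scoped MatrixOrder in
lemma psd_trace_mul_nonneg {n : Type*} [Fintype n] [DecidableEq n]
    {A B : Matrix n n ℂ} (hA : A.PosSemidef) (hB : B.PosSemidef) :
    0 ≤ (A * B).trace := by
  obtain ⟨X, hX⟩ := CStarAlgebra.nonneg_iff_eq_star_mul_self.mp hA.nonneg
  have key : (A * B).trace = (X * B * Xᴴ).trace := by
    rw [hX, star_eq_conjTranspose, Matrix.mul_assoc, Matrix.trace_mul_comm]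
  rw [key]
  exact psd_trace_nonneg (hB.mul_mul_conjTranspose_same _)

lemma pure_psd {n : Type*} [Fintype n] {M : Matrix n n ℂ} (h : IsPureState M) :
    M.PosSemidef := by
  have := Matrix.posSemidef_conjTranspose_mul_self M
  rwa [h.1, h.2.1] at this

lemma compl_psd {n : Type*} [Fintype n] [DecidableEq n] {M : Matrix n n ℂ}
    (h : IsPureState M) : (1 - M).PosSemidef := by
  have hH : (1 - M)ᴴ = 1 - M := by
    rw [conjTranspose_sub, h.1, conjTranspose_one]
  have hI : (1 - M) * (1 - M) = 1 - M := by
    rw [sub_mul, mul_sub, mul_sub, one_mul, h.2.1]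
    simp
  have := Matrix.posSemidef_conjTranspose_mul_self (1 - M)
  rwa [hH, hI] at this

lemma trace_mul_maxEnt {N₁ N₂ : ℕ} (h₁ : 0 < N₁) (h₁₂ : N₁ ≤ N₂)
    (M : Matrix (Fin N₁ × Fin N₂) (Fin N₁ × Fin N₂) ℂ) :
    (M * maxEnt N₁ N₂).trace =
      (N₁ : ℂ)⁻¹ * ∑ j : Fin N₁, ∑ k : Fin N₁,
        M (j, Fin.castLE h₁₂ j) (k, Fin.castLE h₁₂ k) := by
  have hs : star (((Real.sqrt N₁ : ℝ) : ℂ))⁻¹ = (((Real.sqrt N₁ : ℝ) : ℂ))⁻¹ := by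
    simp [← Complex.ofReal_inv]
  have hsq : (((Real.sqrt N₁ : ℝ) : ℂ))⁻¹ * (((Real.sqrt N₁ : ℝ) : ℂ))⁻¹ = (N₁ : ℂ)⁻¹ := by
    rw [← mul_inv, ← Complex.ofReal_mul, Real.mul_self_sqrt (by positivity)]; push_cast; ring
  have hcond : ∀ (a : Fin N₁) (b : Fin N₂), ((a : ℕ) = (b : ℕ)) ↔ (b = Fin.castLE h₁₂ a) := by
    intro a b; rw [Fin.ext_iff]; simp [eq_comm]
  rw [Matrix.trace]
  simp only [Matrix.diag, Matrix.mul_apply, maxEnt]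
  rw [Fintype.sum_prod_type]
  simp only [Fintype.sum_prod_type]
  simp only [hcond, apply_ite (star : ℂ → ℂ), star_zero, hs, mul_ite, mul_zero, ite_mul,
    zero_mul, Finset.sum_ite_eq', Finset.mem_univ, if_true, Finset.sum_ite_irrel,
    Finset.sum_const_zero]
  rw [Finset.mul_sum]
  refine Finset.sum_congr rfl fun a _ => ?_
  rw [Finset.mul_sum]
  exact Finset.sum_congr rfl fun c _ => by rw [hsq, mul_comm]

lemma pure_prod_sum_bound {N₁ N₂ : ℕ} (h₁₂ : N₁ ≤ N₂)
    {A : Matrix (Fin N₁) (Fin N₁) ℂ} {B : Matrix (Fin N₂) (Fin N₂) ℂ}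
    (hA : IsPureState A) (hB : IsPureState B) :
    0 ≤ (∑ j : Fin N₁, ∑ k : Fin N₁, A j k * B (Fin.castLE h₁₂ j) (Fin.castLE h₁₂ k)) ∧
      (∑ j : Fin N₁, ∑ k : Fin N₁, A j k * B (Fin.castLE h₁₂ j) (Fin.castLE h₁₂ k)) ≤ 1 := by
  set D : Matrix (Fin N₁) (Fin N₁) ℂ :=
    (B.submatrix (Fin.castLE h₁₂) (Fin.castLE h₁₂))ᵀ with hD
  have hBpsd := pure_psd hB
  have hDpsd : D.PosSemidef := (hBpsd.submatrix _).transpose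
  have hApsd := pure_psd hA
  have hsum : (∑ j : Fin N₁, ∑ k : Fin N₁, A j k * B (Fin.castLE h₁₂ j) (Fin.castLE h₁₂ k))
      = (A * D).trace := by
    rw [Matrix.trace]
    simp only [Matrix.diag, Matrix.mul_apply, hD, Matrix.transpose_apply,
      Matrix.submatrix_apply]
  have hDtr : D.trace ≤ 1 := by
    have h1 : D.trace = ∑ j : Fin N₁, B (Fin.castLE h₁₂ j) (Fin.castLE h₁₂ j) := by
      simp [hD, Matrix.trace, Matrix.diag]
    have h2 : (∑ j : Fin N₁, B (Fin.castLE h₁₂ j) (Fin.castLE h₁₂ j))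
        = ∑ i ∈ Finset.univ.map (Fin.castLEEmb h₁₂), B i i := by
      rw [Finset.sum_map]; rfl
    have h3 : (∑ i ∈ Finset.univ.map (Fin.castLEEmb h₁₂), B i i)
        ≤ ∑ i : Fin N₂, B i i :=
      Finset.sum_le_sum_of_subset_of_nonneg (Finset.subset_univ _)
        fun i _ _ => psd_diag_nonneg hBpsd i
    rw [h1, h2]
    calc _ ≤ ∑ i : Fin N₂, B i i := h3
      _ = 1 := hB.2.2
  have hcompl : 0 ≤ ((1 - A) * D).trace := psd_trace_mul_nonneg (compl_psd hA) hDpsd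
  have hsub : ((1 - A) * D).trace = D.trace - (A * D).trace := by
    rw [sub_mul, one_mul, Matrix.trace_sub]
  constructor
  · rw [hsum]; exact psd_trace_mul_nonneg hApsd hDpsd
  · rw [hsum]
    have : (A * D).trace ≤ D.trace := by
      have := hcompl
      rw [hsub, sub_nonneg] at this
      exact this
    exact this.trans hDtr

lemma complex_inv_nat_nonneg (n : ℕ) : (0 : ℂ) ≤ (n : ℂ)⁻¹ := by
  rw [show ((n : ℂ))⁻¹ = (((n : ℝ)⁻¹ : ℝ) : ℂ) by push_cast; ring]
  exact_mod_cast Complex.zero_le_real.2 (by positivity)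

/-- Let `2 ≤ N₁ ≤ N₂`, `N = N₁ N₂`, and let `E` be the maximally
entangled pure state on `ℂ^{N₁} ⊗ ℂ^{N₂}`.  Then every separable state `Q` satisfies
`0 ≤ Tr(QE) ≤ 1/N₁` (in the complex order, so in particular the trace is real). -/
theorem separable_trace_maxEnt_le {N₁ N₂ : ℕ} (h₁ : 2 ≤ N₁) (h₁₂ : N₁ ≤ N₂)
    (Q : Matrix (Fin N₁ × Fin N₂) (Fin N₁ × Fin N₂) ℂ) (hQ : IsSeparable2 Q) :
    0 ≤ (Q * maxEnt N₁ N₂).trace ∧ (Q * maxEnt N₁ N₂).trace ≤ ((N₁ : ℂ))⁻¹ := by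
  obtain ⟨k, c, P, hc, hcs, hP, hQe⟩ := hQ
  have h₁' : 0 < N₁ := by omega
  have hinv : (0 : ℂ) ≤ (N₁ : ℂ)⁻¹ := complex_inv_nat_nonneg N₁
  -- bounds for each pure product state
  have hbound : ∀ i, 0 ≤ (P i * maxEnt N₁ N₂).trace ∧
      (P i * maxEnt N₁ N₂).trace ≤ (N₁ : ℂ)⁻¹ := by
    intro i
    obtain ⟨A, B, hA, hB, hPi⟩ := hP i
    have ht := trace_mul_maxEnt h₁' h₁₂ (P i)
    have hSB := pure_prod_sum_bound h₁₂ hA hB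
    have hterm : (∑ j : Fin N₁, ∑ k : Fin N₁,
        (P i) (j, Fin.castLE h₁₂ j) (k, Fin.castLE h₁₂ k))
        = ∑ j : Fin N₁, ∑ k : Fin N₁, A j k * B (Fin.castLE h₁₂ j) (Fin.castLE h₁₂ k) := by
      rw [hPi]; rfl
    rw [ht, hterm]
    exact ⟨mul_nonneg hinv hSB.1,
      by simpa using mul_le_mul_of_nonneg_left hSB.2 hinv⟩
  rw [hQe, Matrix.sum_mul, Matrix.trace_sum]
  simp only [Matrix.smul_mul, Matrix.trace_smul, smul_eq_mul]
  have hcℂ : ∀ i, (0 : ℂ) ≤ (c i : ℂ) := fun i => Complex.zero_le_real.2 (hc i)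
  constructor
  · exact Finset.sum_nonneg fun i _ => mul_nonneg (hcℂ i) (hbound i).1
  · calc (∑ i, (c i : ℂ) * (P i * maxEnt N₁ N₂).trace)
        ≤ ∑ i, (c i : ℂ) * (N₁ : ℂ)⁻¹ :=
          Finset.sum_le_sum fun i _ => mul_le_mul_of_nonneg_left (hbound i).2 (hcℂ i)
      _ = (∑ i, (c i : ℂ)) * (N₁ : ℂ)⁻¹ := by rw [Finset.sum_mul]
      _ = (N₁ : ℂ)⁻¹ := by
          rw [show (∑ i, (c i : ℂ)) = ((∑ i, c i : ℝ) : ℂ) by push_cast; ring, hcs]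
          simp
end
end

section
/- Let 2 ≤ N₁ ≤ N₂, N = N₁N₂, and let E be the maximally entangled pure state on ℂ^{N₁}⊗ℂ^{N₂} (E = |ψ⟩⟨ψ| with ψ = (1/√N₁) Σ_{j=1}^{N₁} e_j⊗e_j). Then for any two separable states Q₁, Q₂ on ℂ^N, the length of the component of Q₁ − Q₂ along the unit normal direction (E − I/N)/‖E − I/N‖ is at most (1/N₁)·√(N/(N−1)); that is, |⟨Q₁ − Q₂, E − I/N⟩| / ‖E − I/N‖ ≤ (1/N₁)·√(N/(N−1)), where ⟨·,·⟩ and ‖·‖ are the Frobenius inner product and norm. -/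
open Matrix BigOperators ComplexOrder

noncomputable section

namespace SepAux

lemma diag_nonneg {n : Type*} [Fintype n] [DecidableEq n] {M : Matrix n n ℂ}
    (hM : M.PosSemidef) (i : n) : 0 ≤ M i i := by
  exact hM.diag_nonneg

lemma trace_nonneg {n : Type*} [Fintype n] [DecidableEq n] {M : Matrix n n ℂ}
    (hM : M.PosSemidef) : 0 ≤ M.trace :=
  Finset.sum_nonneg fun i _ => diag_nonneg hM i

lemma trace_proj_mul_nonneg {n : Type*} [Fintype n] [DecidableEq n] {A C : Matrix n n ℂ}
    (hA₁ : A.IsHermitian) (hA₂ : A * A = A) (hC : C.PosSemidef) : 0 ≤ (A * C).trace := by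
  have h := trace_nonneg (hC.conjTranspose_mul_mul_same A)
  have e : (Aᴴ * C * A).trace = (A * C).trace := by
    rw [hA₁.eq, trace_mul_comm, ← mul_assoc, hA₂]
  rwa [e] at h

lemma trace_proj_mul_le {n : Type*} [Fintype n] [DecidableEq n] {A C : Matrix n n ℂ}
    (hA₁ : A.IsHermitian) (hA₂ : A * A = A) (hC : C.PosSemidef) : (A * C).trace ≤ C.trace := by
  have hB₁ : (1 - A).IsHermitian := by
    unfold Matrix.IsHermitian
    rw [conjTranspose_sub, conjTranspose_one, hA₁.eq]
  have hB₂ : (1 - A) * (1 - A) = 1 - A := by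
    simp [mul_sub, sub_mul, hA₂, sub_sub]
  have h := trace_proj_mul_nonneg hB₁ hB₂ hC
  rw [sub_mul, one_mul, trace_sub] at h
  exact sub_nonneg.mp h

variable {N₁ N₂ : ℕ}

/-- The vector defining the maximally entangled state. -/
def mv (N₁ N₂ : ℕ) : Fin N₁ × Fin N₂ → ℂ :=
  fun z => if (z.1 : ℕ) = (z.2 : ℕ) then (((Real.sqrt N₁ : ℝ) : ℂ))⁻¹ else 0

lemma maxEnt_apply (x y : Fin N₁ × Fin N₂) :
    maxEnt N₁ N₂ x y = mv N₁ N₂ x * star (mv N₁ N₂ y) := rfl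

lemma star_mv (x : Fin N₁ × Fin N₂) : star (mv N₁ N₂ x) = mv N₁ N₂ x := by
  simp [mv, apply_ite (star : ℂ → ℂ)]

lemma cond_iff (h₁₂ : N₁ ≤ N₂) (a : Fin N₁) (b : Fin N₂) :
    ((a : ℕ) = (b : ℕ)) ↔ b = Fin.castLE h₁₂ a := by
  rw [Fin.ext_iff]
  simp [eq_comm]

lemma sum_collapse (h₁₂ : N₁ ≤ N₂) (g : Fin N₁ × Fin N₂ → ℂ) :
    ∑ x : Fin N₁ × Fin N₂, (if (x.1 : ℕ) = (x.2 : ℕ) then g x else 0)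
      = ∑ j : Fin N₁, g (j, Fin.castLE h₁₂ j) := by
  rw [Fintype.sum_prod_type]
  refine Finset.sum_congr rfl fun a _ => ?_
  have : ∀ b : Fin N₂, (if (a : ℕ) = (b : ℕ) then g (a, b) else 0)
      = (if b = Fin.castLE h₁₂ a then g (a, b) else 0) := by
    intro b; exact if_congr (cond_iff h₁₂ a b) rfl rfl
  simp_rw [this]
  simp

lemma sum_mv_mul (h₁₂ : N₁ ≤ N₂) (w : Fin N₁ × Fin N₂ → ℂ) :
    ∑ x : Fin N₁ × Fin N₂, mv N₁ N₂ x * w x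
      = (((Real.sqrt N₁ : ℝ) : ℂ))⁻¹ * ∑ j : Fin N₁, w (j, Fin.castLE h₁₂ j) := by
  have : ∀ x : Fin N₁ × Fin N₂, mv N₁ N₂ x * w x
      = (if (x.1 : ℕ) = (x.2 : ℕ) then (((Real.sqrt N₁ : ℝ) : ℂ))⁻¹ * w x else 0) := by
    intro x; simp [mv, ite_mul]
  simp_rw [this, sum_collapse h₁₂, Finset.mul_sum]

lemma sqrt_inv_sq (h : 0 < N₁) :
    (((Real.sqrt N₁ : ℝ) : ℂ))⁻¹ * (((Real.sqrt N₁ : ℝ) : ℂ))⁻¹ = ((N₁ : ℂ))⁻¹ := by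
  rw [← mul_inv]
  congr 1
  norm_cast
  exact Real.mul_self_sqrt (Nat.cast_nonneg N₁)

lemma sum_mv_sq (h : 0 < N₁) (h₁₂ : N₁ ≤ N₂) :
    ∑ z : Fin N₁ × Fin N₂, mv N₁ N₂ z * star (mv N₁ N₂ z) = 1 := by
  simp_rw [star_mv]
  rw [sum_mv_mul h₁₂]
  have : ∀ j : Fin N₁, mv N₁ N₂ (j, Fin.castLE h₁₂ j) = (((Real.sqrt N₁ : ℝ) : ℂ))⁻¹ := by
    intro j; simp [mv]
  simp_rw [this]
  rw [Finset.sum_const, Finset.card_univ, Fintype.card_fin, nsmul_eq_mul]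
  rw [show (((Real.sqrt N₁ : ℝ) : ℂ))⁻¹ * ((N₁ : ℂ) * (((Real.sqrt N₁ : ℝ) : ℂ))⁻¹)
      = (N₁ : ℂ) * ((((Real.sqrt N₁ : ℝ) : ℂ))⁻¹ * (((Real.sqrt N₁ : ℝ) : ℂ))⁻¹) from by ring,
    sqrt_inv_sq h, mul_inv_cancel₀ (Nat.cast_ne_zero.mpr h.ne')]

lemma maxEnt_herm : (maxEnt N₁ N₂)ᴴ = maxEnt N₁ N₂ := by
  ext x y
  simp only [conjTranspose_apply, maxEnt_apply, star_mul', star_star]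
  ring

lemma maxEnt_trace (h : 0 < N₁) (h₁₂ : N₁ ≤ N₂) : (maxEnt N₁ N₂).trace = 1 := by
  unfold Matrix.trace
  simp_rw [diag_apply, maxEnt_apply]
  exact sum_mv_sq h h₁₂

lemma maxEnt_mul_self (h : 0 < N₁) (h₁₂ : N₁ ≤ N₂) :
    maxEnt N₁ N₂ * maxEnt N₁ N₂ = maxEnt N₁ N₂ := by
  ext x y
  rw [mul_apply]
  simp_rw [maxEnt_apply]
  have : ∀ z, (mv N₁ N₂ x * star (mv N₁ N₂ z)) * (mv N₁ N₂ z * star (mv N₁ N₂ y))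
      = (mv N₁ N₂ z * star (mv N₁ N₂ z)) * (mv N₁ N₂ x * star (mv N₁ N₂ y)) := by
    intro z; ring
  simp_rw [this]
  rw [← Finset.sum_mul, sum_mv_sq h h₁₂, one_mul]


lemma prodMat2_herm {A : Matrix (Fin N₁) (Fin N₁) ℂ} {B : Matrix (Fin N₂) (Fin N₂) ℂ}
    (hA : A.IsHermitian) (hB : B.IsHermitian) : (prodMat2 A B)ᴴ = prodMat2 A B := by
  ext x y
  simp only [conjTranspose_apply, prodMat2, star_mul']
  rw [← conjTranspose_apply, ← conjTranspose_apply, hA.eq, hB.eq]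

lemma prodMat2_trace {A : Matrix (Fin N₁) (Fin N₁) ℂ} {B : Matrix (Fin N₂) (Fin N₂) ℂ}
    (hA : A.trace = 1) (hB : B.trace = 1) : (prodMat2 A B).trace = 1 := by
  unfold Matrix.trace
  simp_rw [diag_apply]
  show ∑ x : Fin N₁ × Fin N₂, A x.1 x.1 * B x.2 x.2 = 1
  rw [Fintype.sum_prod_type]
  dsimp only
  rw [← Finset.sum_mul_sum]
  unfold Matrix.trace at hA hB
  simp_rw [diag_apply] at hA hB
  rw [hA, hB, one_mul]

lemma pureState_posSemidef {n : Type*} [Fintype n] {A : Matrix n n ℂ}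
    (hA : IsPureState A) : A.PosSemidef := by
  have : A = Aᴴ * A := by rw [hA.1.eq, hA.2.1]
  rw [this]
  exact posSemidef_conjTranspose_mul_self A

/-- The overlap of a pure product state with the maximally entangled state. -/
lemma overlap (h : 0 < N₁) (h₁₂ : N₁ ≤ N₂)
    {A : Matrix (Fin N₁) (Fin N₁) ℂ} {B : Matrix (Fin N₂) (Fin N₂) ℂ}
    (hA : IsPureState A) (hB : IsPureState B) :
    0 ≤ frobInner (prodMat2 A B) (maxEnt N₁ N₂) ∧
      frobInner (prodMat2 A B) (maxEnt N₁ N₂) ≤ ((N₁ : ℂ))⁻¹ := by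
  set C : Matrix (Fin N₁) (Fin N₁) ℂ :=
    (B.submatrix (Fin.castLE h₁₂) (Fin.castLE h₁₂))ᵀ with hCdef
  have hval : frobInner (prodMat2 A B) (maxEnt N₁ N₂) = ((N₁ : ℂ))⁻¹ * (A * C).trace := by
    unfold frobInner
    rw [prodMat2_herm hA.1 hB.1]
    unfold Matrix.trace
    simp_rw [diag_apply, mul_apply, maxEnt_apply]
    have step1 : ∀ x : Fin N₁ × Fin N₂,
        ∑ y : Fin N₁ × Fin N₂, prodMat2 A B x y * (mv N₁ N₂ y * star (mv N₁ N₂ x))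
        = star (mv N₁ N₂ x) * ∑ y, mv N₁ N₂ y * prodMat2 A B x y := by
      intro x
      rw [Finset.mul_sum]
      exact Finset.sum_congr rfl fun y _ => by ring
    simp_rw [step1, star_mv]
    rw [sum_mv_mul h₁₂ (fun x => ∑ y, mv N₁ N₂ y * prodMat2 A B x y)]
    simp_rw [sum_mv_mul h₁₂, Finset.mul_sum, ← mul_assoc, sqrt_inv_sq h]
    refine Finset.sum_congr rfl fun j _ => Finset.sum_congr rfl fun k _ => ?_
    simp only [prodMat2, hCdef, transpose_apply, submatrix_apply]
    ring
  have hCpsd : C.PosSemidef := ((pureState_posSemidef hB).submatrix _).transpose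
  have ht0 : 0 ≤ (A * C).trace := trace_proj_mul_nonneg hA.1 hA.2.1 hCpsd
  have ht1 : (A * C).trace ≤ 1 := by
    refine le_trans (trace_proj_mul_le hA.1 hA.2.1 hCpsd) ?_
    have : C.trace = ∑ j : Fin N₁, B (Fin.castLE h₁₂ j) (Fin.castLE h₁₂ j) := by
      unfold Matrix.trace
      simp [hCdef]
    rw [this, ← hB.2.2]
    unfold Matrix.trace
    simp_rw [diag_apply]
    have hinj : Function.Injective (Fin.castLE h₁₂) := Fin.castLE_injective h₁₂
    calc ∑ j : Fin N₁, B (Fin.castLE h₁₂ j) (Fin.castLE h₁₂ j)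
        = ∑ b ∈ Finset.univ.map ⟨Fin.castLE h₁₂, hinj⟩, B b b := by
          rw [Finset.sum_map]
          rfl
      _ ≤ ∑ b : Fin N₂, B b b := by
          refine Finset.sum_le_sum_of_subset_of_nonneg (Finset.subset_univ _)
            fun b _ _ => diag_nonneg (pureState_posSemidef hB) b
  have hcnn : (0 : ℂ) ≤ ((N₁ : ℂ))⁻¹ := by
    rw [show ((N₁ : ℂ))⁻¹ = (((N₁ : ℝ)⁻¹ : ℝ) : ℂ) from by push_cast; ring]
    rw [Complex.zero_le_real]
    positivity
  constructor
  · rw [hval]; exact mul_nonneg hcnn ht0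
  · rw [hval]
    calc ((N₁ : ℂ))⁻¹ * (A * C).trace ≤ ((N₁ : ℂ))⁻¹ * 1 :=
      mul_le_mul_of_nonneg_left ht1 hcnn
    _ = ((N₁ : ℂ))⁻¹ := mul_one _


lemma frobInner_sum_smul {m : Type*} [Fintype m] (k : ℕ) (c : Fin k → ℝ)
    (P : Fin k → Matrix m m ℂ) (M : Matrix m m ℂ) :
    frobInner (∑ i, (c i : ℂ) • P i) M = ∑ i, (c i : ℂ) * frobInner (P i) M := by
  unfold frobInner
  rw [conjTranspose_sum, Finset.sum_mul, trace_sum]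
  refine Finset.sum_congr rfl fun i _ => ?_
  rw [conjTranspose_smul, Complex.star_def, Complex.conj_ofReal, smul_mul_assoc, trace_smul,
    smul_eq_mul]

lemma frobInner_sub_left {m : Type*} [Fintype m] (X Y M : Matrix m m ℂ) :
    frobInner (X - Y) M = frobInner X M - frobInner Y M := by
  unfold frobInner
  rw [conjTranspose_sub, sub_mul, trace_sub]

lemma frobInner_sub_right {m : Type*} [Fintype m] (X M M' : Matrix m m ℂ) :
    frobInner X (M - M') = frobInner X M - frobInner X M' := by
  unfold frobInner
  rw [mul_sub, trace_sub]

lemma frobInner_smul_one {m : Type*} [Fintype m] [DecidableEq m] (X : Matrix m m ℂ) (c : ℂ) :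
    frobInner X (c • 1) = c * star X.trace := by
  unfold frobInner
  rw [mul_smul_comm, mul_one, trace_smul, smul_eq_mul, trace_conjTranspose]

lemma sep_bounds (h : 0 < N₁) (h₁₂ : N₁ ≤ N₂)
    {Q : Matrix (Fin N₁ × Fin N₂) (Fin N₁ × Fin N₂) ℂ} (hQ : IsSeparable2 Q) :
    Q.trace = 1 ∧ 0 ≤ frobInner Q (maxEnt N₁ N₂) ∧
      frobInner Q (maxEnt N₁ N₂) ≤ ((N₁ : ℂ))⁻¹ := by
  obtain ⟨k, c, P, hc, hsum, hP, rfl⟩ := hQ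
  have htr : ∀ i, (P i).trace = 1 := by
    intro i
    obtain ⟨A, B, hA, hB, hPe⟩ := hP i
    rw [hPe]
    exact prodMat2_trace hA.2.2 hB.2.2
  have hover : ∀ i, 0 ≤ frobInner (P i) (maxEnt N₁ N₂) ∧
      frobInner (P i) (maxEnt N₁ N₂) ≤ ((N₁ : ℂ))⁻¹ := by
    intro i
    obtain ⟨A, B, hA, hB, hPe⟩ := hP i
    rw [hPe]
    exact overlap h h₁₂ hA hB
  have hcC : ∀ i, (0 : ℂ) ≤ (c i : ℂ) := fun i => by
    rw [Complex.zero_le_real]; exact hc i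
  refine ⟨?_, ?_, ?_⟩
  · rw [trace_sum]
    simp_rw [trace_smul, smul_eq_mul, htr, mul_one]
    rw [← Complex.ofReal_sum, hsum, Complex.ofReal_one]
  · rw [frobInner_sum_smul]
    exact Finset.sum_nonneg fun i _ => mul_nonneg (hcC i) (hover i).1
  · rw [frobInner_sum_smul]
    calc ∑ i, (c i : ℂ) * frobInner (P i) (maxEnt N₁ N₂)
        ≤ ∑ i, (c i : ℂ) * ((N₁ : ℂ))⁻¹ := Finset.sum_le_sum fun i _ =>
          mul_le_mul_of_nonneg_left (hover i).2 (hcC i)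
      _ = ((N₁ : ℂ))⁻¹ := by
          rw [← Finset.sum_mul, ← Complex.ofReal_sum, hsum, Complex.ofReal_one, one_mul]

end SepAux

/-- Let `2 ≤ N₁ ≤ N₂`, `N = N₁ N₂`, and let `E` be the maximally
entangled pure state on `ℂ^{N₁} ⊗ ℂ^{N₂}`.  For any two separable states `Q₁, Q₂`, the
length of the component of `Q₁ - Q₂` along the unit normal `(E - I/N)/‖E - I/N‖` is at
most `(1/N₁) ⬝ √(N/(N-1))`:
`|⟨Q₁ - Q₂, E - I/N⟩| / ‖E - I/N‖ ≤ (1/N₁) ⬝ √(N/(N-1))`. -/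
theorem separable_component_along_maxEnt {N₁ N₂ : ℕ} (h₁ : 2 ≤ N₁) (h₁₂ : N₁ ≤ N₂)
    (Q₁ Q₂ : Matrix (Fin N₁ × Fin N₂) (Fin N₁ × Fin N₂) ℂ)
    (hQ₁ : IsSeparable2 Q₁) (hQ₂ : IsSeparable2 Q₂) :
    ‖frobInner (Q₁ - Q₂)
        (maxEnt N₁ N₂ - (((N₁ * N₂ : ℕ) : ℂ))⁻¹ • (1 : Matrix (Fin N₁ × Fin N₂) (Fin N₁ × Fin N₂) ℂ))‖ /
      frobNorm (maxEnt N₁ N₂ - (((N₁ * N₂ : ℕ) : ℂ))⁻¹ • (1 : Matrix (Fin N₁ × Fin N₂) (Fin N₁ × Fin N₂) ℂ))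
    ≤ ((N₁ : ℝ))⁻¹ * Real.sqrt (((N₁ * N₂ : ℕ) : ℝ) / (((N₁ * N₂ : ℕ) : ℝ) - 1)) := by
  have hN1pos : 0 < N₁ := by omega
  set n : ℝ := ((N₁ * N₂ : ℕ) : ℝ) with hn
  have hn4 : (4 : ℝ) ≤ n := by
    have h4 : 4 ≤ N₁ * N₂ := le_trans (by norm_num) (Nat.mul_le_mul h₁ (le_trans h₁ h₁₂))
    rw [hn]
    exact_mod_cast h4
  have hnpos : (0 : ℝ) < n := by linarith
  have hnC : ((N₁ * N₂ : ℕ) : ℂ) ≠ 0 :=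
    Nat.cast_ne_zero.mpr (Nat.mul_ne_zero (by omega) (by omega))
  set c : ℂ := (((N₁ * N₂ : ℕ) : ℂ))⁻¹ with hc
  set E := maxEnt N₁ N₂ with hE
  set D := E - c • (1 : Matrix (Fin N₁ × Fin N₂) (Fin N₁ × Fin N₂) ℂ) with hD
  -- bounds on the overlaps
  obtain ⟨htr₁, hlb₁, hub₁⟩ := SepAux.sep_bounds hN1pos h₁₂ hQ₁
  obtain ⟨htr₂, hlb₂, hub₂⟩ := SepAux.sep_bounds hN1pos h₁₂ hQ₂
  set z₁ := frobInner Q₁ E with hz₁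
  set z₂ := frobInner Q₂ E with hz₂
  have hre : ∀ z : ℂ, 0 ≤ z → z ≤ ((N₁ : ℂ))⁻¹ →
      z = ((z.re : ℝ) : ℂ) ∧ 0 ≤ z.re ∧ z.re ≤ (N₁ : ℝ)⁻¹ := by
    intro z h0 h1
    obtain ⟨h0re, h0im⟩ := Complex.le_def.mp h0
    obtain ⟨h1re, _⟩ := Complex.le_def.mp h1
    refine ⟨Complex.ext rfl (by simpa using h0im.symm), by simpa using h0re, ?_⟩
    have : ((N₁ : ℂ))⁻¹.re = (N₁ : ℝ)⁻¹ := by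
      rw [show ((N₁ : ℂ))⁻¹ = (((N₁ : ℝ)⁻¹ : ℝ) : ℂ) from by push_cast; ring, Complex.ofReal_re]
    rwa [this] at h1re
  obtain ⟨he₁, hr₁0, hr₁1⟩ := hre z₁ hlb₁ hub₁
  obtain ⟨he₂, hr₂0, hr₂1⟩ := hre z₂ hlb₂ hub₂
  -- numerator
  have hnum : frobInner (Q₁ - Q₂) D = z₁ - z₂ := by
    rw [SepAux.frobInner_sub_left, hD, SepAux.frobInner_sub_right, SepAux.frobInner_sub_right,
      SepAux.frobInner_smul_one, SepAux.frobInner_smul_one, htr₁, htr₂, ← hz₁, ← hz₂]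
    ring
  have habs : ‖frobInner (Q₁ - Q₂) D‖ ≤ (N₁ : ℝ)⁻¹ := by
    rw [hnum, he₁, he₂, ← Complex.ofReal_sub, Complex.norm_real, Real.norm_eq_abs, abs_le]
    constructor <;> linarith
  -- denominator
  have hEh : Eᴴ = E := SepAux.maxEnt_herm
  have hEE : E * E = E := SepAux.maxEnt_mul_self hN1pos h₁₂
  have hEtr : E.trace = 1 := SepAux.maxEnt_trace hN1pos h₁₂
  have hDh : Dᴴ = D := by
    rw [hD, conjTranspose_sub, hEh, conjTranspose_smul, conjTranspose_one, hc]
    simp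
  have hDD : frobInner D D = ((1 - n⁻¹ : ℝ) : ℂ) := by
    unfold frobInner
    rw [hDh, hD]
    have expand : (E - c • 1) * (E - c • 1)
        = E * E - c • E - c • E + (c * c) • (1 : Matrix (Fin N₁ × Fin N₂) (Fin N₁ × Fin N₂) ℂ) := by
      simp only [sub_mul, mul_sub, smul_mul_assoc, mul_smul_comm, smul_smul, smul_sub,
        one_mul, mul_one, ← hE]
      abel
    rw [expand, trace_add, trace_sub, trace_sub, trace_smul, trace_smul, hEE, hEtr,
      trace_one]
    have hcard : (Fintype.card (Fin N₁ × Fin N₂) : ℂ) = ((N₁ * N₂ : ℕ) : ℂ) := by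
      simp [Fintype.card_prod]
    rw [hcard]
    rw [hc]
    have : (1 : ℂ) - (((N₁ * N₂ : ℕ) : ℂ))⁻¹ • 1 - (((N₁ * N₂ : ℕ) : ℂ))⁻¹ • 1 +
        ((((N₁ * N₂ : ℕ) : ℂ))⁻¹ * (((N₁ * N₂ : ℕ) : ℂ))⁻¹) • ((N₁ * N₂ : ℕ) : ℂ)
        = 1 - (((N₁ * N₂ : ℕ) : ℂ))⁻¹ := by
      simp only [smul_eq_mul]
      rw [mul_assoc, inv_mul_cancel₀ hnC]
      ring
    rw [this]
    simp only [hn]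
    push_cast
    ring
  have hnorm : frobNorm D = Real.sqrt (1 - n⁻¹) := by
    unfold frobNorm
    rw [hDD, Complex.ofReal_re]
  have h1n : (0 : ℝ) < 1 - n⁻¹ := by
    have : n⁻¹ ≤ (4 : ℝ)⁻¹ := by
      apply inv_anti₀ <;> linarith
    linarith
  have hs : 0 < Real.sqrt (1 - n⁻¹) := Real.sqrt_pos.mpr h1n
  have hn0 : n ≠ 0 := ne_of_gt hnpos
  have hrhs : Real.sqrt (n / (n - 1)) = (Real.sqrt (1 - n⁻¹))⁻¹ := by
    have hfrac : (1 - n⁻¹) = (n - 1) / n := by field_simp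
    rw [← Real.sqrt_inv, hfrac, inv_div]
  rw [hnorm, hrhs, ← div_eq_mul_inv]
  exact (div_le_div_iff_of_pos_right hs).mpr habs
end
end
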